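/- arXiv:2106.05243 — 6 statements merged into one kernel-verified Lean document; each statement's English description precedes it below -/
import Mathlib

section
/- Let A be a compact self-adjoint operator on a separable Hilbert space H, and suppose A = B + E where B is a bounded operator of finite rank r and E is a bounded operator with operator norm strictly less than ε. Then the number of eigenvalues of A (counted with multiplicity) whose absolute value is at least ε is at most r. -/
/-- If a compact self-adjoint operator `A` on a separable Hilbert space is written
as `A = B + E` with `B` of finite rank `r` and `‖E‖ < ε`, then the total dimension of
the eigenspaces of `A` for eigenvalues of absolute value `≥ ε` is at most `r`. -/
theorem stmt_2 {H : Type*} [NormedAddCommGroup H] [InnerProductSpace ℂ H]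
    [CompleteSpace H] [TopologicalSpace.SeparableSpace H]
    (A B E : H →L[ℂ] H) (hA : IsCompactOperator A) (hAsa : IsSelfAdjoint A)
    (r : ℕ) (hB : Module.rank ℂ ↥(LinearMap.range (B : H →ₗ[ℂ] H)) = r)
    (ε : ℝ) (hε : 0 < ε) (hE : ‖E‖ < ε) (hABE : A = B + E) :
    Module.rank ℂ
      ↥(⨆ (μ : ℂ) (_ : ε ≤ ‖μ‖), Module.End.eigenspace (A : H →ₗ[ℂ] H) μ) ≤ r := by
  classical
  set T := (A : H →ₗ[ℂ] H) with hT_def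
  have hT : T.IsSymmetric := hAsa.isSymmetric
  set W : Submodule ℂ H := ⨆ (μ : ℂ) (_ : ε ≤ ‖μ‖), Module.End.eigenspace T μ with hW
  -- Key estimate: on W, `‖A x‖ ≥ ε ‖x‖`.
  have key : ∀ x ∈ W, ε * ‖x‖ ≤ ‖A x‖ := by
    intro x hx
    rw [hW, iSup_subtype'] at hx
    rw [Submodule.mem_iSup_iff_exists_finsupp] at hx
    obtain ⟨f, hf, hfx⟩ := hx
    have hV : OrthogonalFamily ℂ
        (fun i : {μ : ℂ // ε ≤ ‖μ‖} => Module.End.eigenspace T i.1)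
        (fun i => (Module.End.eigenspace T i.1).subtypeₗᵢ) :=
      hT.orthogonalFamily_eigenspaces.comp Subtype.coe_injective
    set l : ∀ i : {μ : ℂ // ε ≤ ‖μ‖}, Module.End.eigenspace T i.1 :=
      fun i => ⟨f i, hf i⟩ with hl
    have hx_sum : x = ∑ i ∈ f.support, ((Module.End.eigenspace T i.1).subtypeₗᵢ) (l i) := by
      rw [← hfx]; rfl
    have h1 : ‖x‖ ^ 2 = ∑ i ∈ f.support, ‖l i‖ ^ 2 := by
      rw [hx_sum]; exact hV.norm_sum l f.support
    have hAx : A x = ∑ i ∈ f.support,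
        ((Module.End.eigenspace T i.1).subtypeₗᵢ) (i.1 • l i) := by
      have hx' : x = ∑ i ∈ f.support, f i := by rw [← hfx]; rfl
      rw [hx']
      rw [map_sum]
      refine Finset.sum_congr rfl fun i _ => ?_
      have hmem := hf i
      rw [Module.End.mem_eigenspace_iff] at hmem
      simpa [hT_def, hl] using hmem
    have h2 : ‖A x‖ ^ 2 = ∑ i ∈ f.support, ‖i.1 • l i‖ ^ 2 := by
      rw [hAx]; exact hV.norm_sum _ f.support
    have h3 : (ε * ‖x‖) ^ 2 ≤ ‖A x‖ ^ 2 := by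
      rw [mul_pow, h1, h2, Finset.mul_sum]
      refine Finset.sum_le_sum fun i _ => ?_
      rw [norm_smul, mul_pow]
      exact mul_le_mul_of_nonneg_right
        (pow_le_pow_left₀ hε.le i.2 2) (sq_nonneg _)
    have h4 := Real.sqrt_le_sqrt h3
    rwa [Real.sqrt_sq (by positivity), Real.sqrt_sq (norm_nonneg _)] at h4
  -- Rank argument
  by_contra hcon
  push_neg at hcon
  set φ : W →ₗ[ℂ] H := (B : H →ₗ[ℂ] H).comp W.subtype with hφ
  have hrange : ∀ y : W, φ y ∈ LinearMap.range (B : H →ₗ[ℂ] H) := fun y => ⟨y, rfl⟩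
  have hker : LinearMap.ker φ ≠ ⊥ := by
    intro h
    have hinj : Function.Injective φ := LinearMap.ker_eq_bot.mp h
    have hinj' : Function.Injective
        (LinearMap.codRestrict (LinearMap.range (B : H →ₗ[ℂ] H)) φ hrange) := by
      intro a b hab
      apply hinj
      simpa using congrArg Subtype.val hab
    have hle : Module.rank ℂ W ≤ Module.rank ℂ (LinearMap.range (B : H →ₗ[ℂ] H)) :=
      LinearMap.rank_le_of_injective _ hinj'
    rw [hB] at hle
    exact absurd hcon (not_lt.mpr hle)
  obtain ⟨x, hxker, hx0⟩ := (LinearMap.ker φ).ne_bot_iff.mp hker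
  have hBx : B (x : H) = 0 := hxker
  have hx1 : (x : H) ≠ 0 := fun h => hx0 (Subtype.ext h)
  have hAxE : A (x : H) = E (x : H) := by rw [hABE]; simp [hBx]
  have h1 : ε * ‖(x : H)‖ ≤ ‖A (x : H)‖ := key _ x.2
  have h2 : ‖E (x : H)‖ ≤ ‖E‖ * ‖(x : H)‖ := E.le_opNorm _
  have hxpos : (0 : ℝ) < ‖(x : H)‖ := norm_pos_iff.mpr hx1
  have : ε * ‖(x : H)‖ < ε * ‖(x : H)‖ := by
    calc ε * ‖(x : H)‖ ≤ ‖A (x : H)‖ := h1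
      _ = ‖E (x : H)‖ := by rw [hAxE]
      _ ≤ ‖E‖ * ‖(x : H)‖ := h2
      _ < ε * ‖(x : H)‖ := mul_lt_mul_of_pos_right hE hxpos
  exact lt_irrefl _ this
end

section
/- Let J = [[i, 0],[1, i]] and for b ∈ ℂ let B(b) = [[1, b],[0, −1]]. If S = [[1, 2i],[0,1]], then S·B(b)·J·S^{−1} = B(b)·J^{−1} for all b. Consequently, for any b_0,…,b_{m+1} ∈ ℂ, the equation ∏_{j=0}^{m+1} B(b_j) J = −1 holds if and only if ∏_{j=0}^{m+1} B(b_j) J^{−1} = −1. -/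
open Complex Matrix

private lemma Jinv : (!![I, 0; 1, I] : Matrix (Fin 2) (Fin 2) ℂ)⁻¹ = !![-I, 0; 1, -I] := by
  apply Matrix.inv_eq_right_inv
  ext i j
  fin_cases i <;> fin_cases j <;>
    simp [Matrix.mul_apply, Fin.sum_univ_two, Complex.I_mul_I]

private lemma Sinv : (!![1, 2*I; 0, 1] : Matrix (Fin 2) (Fin 2) ℂ)⁻¹ = !![1, -(2*I); 0, 1] := by
  apply Matrix.inv_eq_right_inv
  ext i j
  fin_cases i <;> fin_cases j <;>
    simp [Matrix.mul_apply, Fin.sum_univ_two]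

/-- `J = [[i,0],[1,i]]`, `B(b) = [[1,b],[0,-1]]`, `S = [[1,2i],[0,1]]`. Then
`S·B(b)·J·S⁻¹ = B(b)·J⁻¹` for all `b`, and consequently for any `b_0,…,b_{m+1}`,
`∏_j B(b_j) J = -1 ↔ ∏_j B(b_j) J⁻¹ = -1` (products taken in order `j = 0,…,m+1`). -/
theorem stmt_7 :
    (∀ b : ℂ,
      !![1, 2*I; 0, 1] * (!![1, b; 0, -1] * !![I, 0; 1, I]) * (!![1, 2*I; 0, 1])⁻¹
        = !![1, b; 0, -1] * (!![I, 0; 1, I] : Matrix (Fin 2) (Fin 2) ℂ)⁻¹) ∧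
    ∀ (m : ℕ) (b : ℕ → ℂ),
      ((List.range (m + 2)).map
          (fun j => !![1, b j; 0, -1] * (!![I, 0; 1, I] : Matrix (Fin 2) (Fin 2) ℂ))).prod
        = -1 ↔
      ((List.range (m + 2)).map
          (fun j => !![1, b j; 0, -1] * (!![I, 0; 1, I] : Matrix (Fin 2) (Fin 2) ℂ)⁻¹)).prod
        = -1 := by
  set S : Matrix (Fin 2) (Fin 2) ℂ := !![1, 2*I; 0, 1] with hSdef
  set S' : Matrix (Fin 2) (Fin 2) ℂ := !![1, -(2*I); 0, 1] with hS'def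
  have hSS' : S * S' = 1 := by
    rw [hSdef, hS'def]
    ext i j
    fin_cases i <;> fin_cases j <;>
      simp [Matrix.mul_apply, Fin.sum_univ_two, Matrix.one_apply]
  have hS'S : S' * S = 1 := by
    rw [hSdef, hS'def]
    ext i j
    fin_cases i <;> fin_cases j <;>
      simp [Matrix.mul_apply, Fin.sum_univ_two, Matrix.one_apply]
  have key : ∀ b : ℂ,
      S * (!![1, b; 0, -1] * !![I, 0; 1, I])
        = (!![1, b; 0, -1] * (!![I, 0; 1, I] : Matrix (Fin 2) (Fin 2) ℂ)⁻¹) * S := by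
    intro b
    rw [Jinv, hSdef]
    ext i j
    fin_cases i <;> fin_cases j <;>
      simp [Matrix.mul_apply, Fin.sum_univ_two] <;> ring_nf <;>
      simp [Complex.I_sq] <;> ring
  constructor
  · intro b
    rw [Sinv, ← hS'def, key b, mul_assoc, hSS', mul_one]
  · intro m b
    have conj : ∀ l : List ℕ,
        S * ((l.map (fun j => !![1, b j; 0, -1] * !![I, 0; 1, I])).prod)
          = ((l.map (fun j => !![1, b j; 0, -1] *
              (!![I, 0; 1, I] : Matrix (Fin 2) (Fin 2) ℂ)⁻¹)).prod) * S := by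
      intro l
      induction l with
      | nil => simp
      | cons a t ih =>
          rw [List.map_cons, List.prod_cons, List.map_cons, List.prod_cons,
            ← mul_assoc, key (b a), mul_assoc, ih, ← mul_assoc]
    constructor
    · intro h
      have := conj (List.range (m + 2))
      rw [h] at this
      have : ((List.range (m + 2)).map (fun j => !![1, b j; 0, -1] *
          (!![I, 0; 1, I] : Matrix (Fin 2) (Fin 2) ℂ)⁻¹)).prod * (S * S')
            = S * (-1) * S' := by rw [← mul_assoc, ← this, mul_assoc]
      rw [hSS', mul_one] at this
      rw [this]
      simp [mul_assoc, hSS']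
    · intro h
      have h2 := conj (List.range (m + 2))
      rw [h] at h2
      have : S' * (S * ((List.range (m + 2)).map
          (fun j => !![1, b j; 0, -1] * !![I, 0; 1, I])).prod) = S' * (-1 * S) := by rw [h2]
      rw [← mul_assoc, hS'S, one_mul] at this
      rw [this]
      simp [← mul_assoc, hS'S]
end

section
/- Let b ∈ ℝ satisfy the system P_{m−1}(b) = b and P_m(b) = 1, where P_r are the Chebyshev-like polynomials defined by P_0 = 1, P_1 = b, P_r = b P_{r−1} − P_{r−2}. Then P_{m+1}(b) = 0 and hence b = 2 cos(πk/(m+2)) for some odd integer k with 1 ≤ k ≤ m+1. -/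
/-- The one-variable continuant specialization: `P_0 = 1`, `P_1 = b`,
`P_r = b·P_{r-1} - P_{r-2}`. -/
def pcheb (b : ℝ) : ℕ → ℝ
  | 0 => 1
  | 1 => b
  | (r + 2) => b * pcheb b (r + 1) - pcheb b r

lemma pcheb_mono (b : ℝ) (hb : 2 ≤ b) :
    ∀ r, 1 ≤ pcheb b r ∧ pcheb b r ≤ pcheb b (r + 1) := by
  intro r
  induction r with
  | zero => simp [pcheb]; linarith
  | succ n ih =>
    obtain ⟨ih1, ih2⟩ := ih
    refine ⟨by linarith, ?_⟩
    show pcheb b (n + 1) ≤ b * pcheb b (n + 1) - pcheb b n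
    nlinarith

lemma pcheb_neg (b : ℝ) :
    ∀ r, pcheb (-b) r = (-1) ^ r * pcheb b r ∧
      pcheb (-b) (r + 1) = (-1) ^ (r + 1) * pcheb b (r + 1) := by
  intro r
  induction r with
  | zero => simp [pcheb]
  | succ n ih =>
    obtain ⟨ih1, ih2⟩ := ih
    refine ⟨ih2, ?_⟩
    show -b * pcheb (-b) (n + 1) - pcheb (-b) n = _
    rw [ih1, ih2]
    show _ = (-1) ^ (n + 2) * (b * pcheb b (n + 1) - pcheb b n)
    ring

lemma pcheb_sin (θ : ℝ) :
    ∀ r : ℕ, pcheb (2 * Real.cos θ) r * Real.sin θ = Real.sin (((r : ℝ) + 1) * θ) ∧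
      pcheb (2 * Real.cos θ) (r + 1) * Real.sin θ = Real.sin (((r : ℝ) + 2) * θ) := by
  intro r
  induction r with
  | zero =>
    constructor
    · simp [pcheb]
    · show 2 * Real.cos θ * Real.sin θ = _
      norm_num
      rw [show ((2 : ℝ)) * θ = θ + θ by ring, Real.sin_add]
      ring
  | succ n ih =>
    obtain ⟨ih1, ih2⟩ := ih
    constructor
    · rw [show ((n + 1 : ℕ) : ℝ) + 1 = (n : ℝ) + 2 by push_cast; ring]
      exact ih2
    · rw [show ((n + 1 : ℕ) : ℝ) + 2 = (n : ℝ) + 3 by push_cast; ring]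
      show (2 * Real.cos θ * pcheb (2 * Real.cos θ) (n + 1)
          - pcheb (2 * Real.cos θ) n) * Real.sin θ = _
      have key : Real.sin (((n : ℝ) + 3) * θ)
          = 2 * Real.cos θ * Real.sin (((n : ℝ) + 2) * θ) - Real.sin (((n : ℝ) + 1) * θ) := by
        rw [show ((n : ℝ) + 3) * θ = (((n : ℝ) + 2) * θ) + θ by ring,
          show ((n : ℝ) + 1) * θ = (((n : ℝ) + 2) * θ) - θ by ring,
          Real.sin_add, Real.sin_sub]
        ring
      rw [key, ← ih1, ← ih2]
      ring

/-- If `b ∈ ℝ` satisfies `P_{m-1}(b) = b` and `P_m(b) = 1`, then `P_{m+1}(b) = 0`,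
hence `b = 2 cos(πk/(m+2))` for some odd `k` with `1 ≤ k ≤ m+1`. -/
theorem stmt_11 (m : ℕ) (hm : 1 ≤ m) (b : ℝ)
    (h1 : pcheb b (m - 1) = b) (h2 : pcheb b m = 1) :
    pcheb b (m + 1) = 0 ∧
    ∃ k : ℕ, Odd k ∧ 1 ≤ k ∧ k ≤ m + 1 ∧
      b = 2 * Real.cos (Real.pi * k / (m + 2)) := by
  have e1 : pcheb b (m + 1) = 0 := by
    have hmm : m + 1 = (m - 1) + 2 := by omega
    have hmm' : m - 1 + 1 = m := by omega
    rw [hmm]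
    show b * pcheb b (m - 1 + 1) - pcheb b (m - 1) = 0
    rw [hmm', h1, h2]; ring
  refine ⟨e1, ?_⟩
  have hb2 : b < 2 := by
    by_contra h
    push_neg at h
    have := (pcheb_mono b h (m + 1)).1
    linarith
  have hbneg2 : -2 < b := by
    by_contra h
    push_neg at h
    have h' : (2 : ℝ) ≤ -b := by linarith
    have hmono := (pcheb_mono (-b) h' (m + 1)).1
    have hneg := (pcheb_neg b (m + 1)).1
    rw [e1, mul_zero] at hneg
    rw [hneg] at hmono
    linarith
  set θ := Real.arccos (b / 2) with hθdef
  have hcos : Real.cos θ = b / 2 := Real.cos_arccos (by linarith) (by linarith)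
  have hb : b = 2 * Real.cos θ := by rw [hcos]; ring
  have hθpos : 0 < θ := Real.arccos_pos.2 (by linarith)
  have hθlt : θ < Real.pi := by
    rcases lt_or_eq_of_le (Real.arccos_le_pi (b / 2)) with h | h
    · exact h
    · exfalso
      have : Real.cos θ = -1 := by rw [hθdef, h, Real.cos_pi]
      rw [hcos] at this
      linarith
  have hsinpos : 0 < Real.sin θ := Real.sin_pos_of_pos_of_lt_pi hθpos hθlt
  have hsin1 := (pcheb_sin θ m).1
  have hsin2 := (pcheb_sin θ (m + 1)).1
  rw [← hb] at hsin1 hsin2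
  rw [e1, zero_mul] at hsin2
  push_cast at hsin2
  -- sin((m+2)θ) = 0
  obtain ⟨n, hn⟩ := Real.sin_eq_zero_iff.1 hsin2.symm
  have hpi : 0 < Real.pi := Real.pi_pos
  have hnpos : 0 < n := by
    by_contra h
    push_neg at h
    have hc : ((n : ℝ)) ≤ 0 := by exact_mod_cast Int.cast_nonpos.2 h
    have h1' : (n : ℝ) * Real.pi ≤ 0 := mul_nonpos_of_nonpos_of_nonneg hc (le_of_lt hpi)
    nlinarith [mul_pos (by positivity : (0 : ℝ) < (m : ℝ) + 1 + 1) hθpos]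
  have hnlt : (n : ℝ) < (m : ℝ) + 2 := by
    have h1' : (n : ℝ) * Real.pi < ((m : ℝ) + 2) * Real.pi := by
      rw [hn]
      have hmpos : (0 : ℝ) < (m : ℝ) + 2 := by positivity
      nlinarith
    exact lt_of_mul_lt_mul_right (by linarith) (le_of_lt hpi)
  have hnle : n ≤ m + 1 := by
    have : n < (m : ℤ) + 2 := by exact_mod_cast hnlt
    omega
  have hm2 : ((m : ℝ) + 2) ≠ 0 := by positivity
  have hθeq : θ = (n : ℝ) * Real.pi / ((m : ℝ) + 2) := by
    rw [eq_div_iff hm2, hn]; ring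
  -- parity: n is odd
  have hsinm : Real.sin (((m : ℝ) + 1) * θ) = Real.sin θ := by
    rw [← hsin1, h2, one_mul]
  have harg : ((m : ℝ) + 1) * θ = (n : ℝ) * Real.pi - θ := by
    rw [hn]; ring
  have hodd : Odd n := by
    rcases Int.even_or_odd n with he | ho
    · exfalso
      obtain ⟨j, hj⟩ := he
      have hjr : (n : ℝ) * Real.pi = (j : ℝ) * (2 * Real.pi) := by
        rw [hj]; push_cast; ring
      rw [harg, Real.sin_sub, hjr, Real.cos_int_mul_two_pi,
        show (j : ℝ) * (2 * Real.pi) = ((2 * j : ℤ) : ℝ) * Real.pi by push_cast; ring,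
        Real.sin_int_mul_pi] at hsinm
      simp at hsinm
      linarith
    · exact ho
  obtain ⟨j, hj⟩ := hodd
  refine ⟨n.toNat, ⟨j.toNat, by omega⟩, by omega, by omega, ?_⟩
  rw [hb, hθeq]
  congr 1
  have hcast : ((n.toNat : ℕ) : ℝ) = (n : ℝ) := by
    exact_mod_cast congrArg (Int.cast : ℤ → ℝ) (Int.toNat_of_nonneg (le_of_lt hnpos))
  rw [hcast]
  ring
end

section
/- For a nonzero real number b, ∫_ℝ ( 2·𝟙[x² − 4b ≥ 0]/√|x² − 4b| − (1 + sign(log|x|))/|x| ) dx = −log|b|, where the integrand is defined for x ≠ 0, ±2√b and the integral is absolutely convergent. -/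
open MeasureTheory

open Real Set Filter Topology in
private lemma stmt13_hasDerivAt_g {b x : ℝ} (hx : 0 < x) (h : 0 < x^2 - 4*b) :
    HasDerivAt (fun y => Real.log (y + Real.sqrt (y^2 - 4*b))) (1 / Real.sqrt (x^2 - 4*b)) x := by
  have hs : 0 < Real.sqrt (x^2 - 4*b) := Real.sqrt_pos.2 h
  have h1 : HasDerivAt (fun y : ℝ => y^2 - 4*b) (2*x) x := by
    simpa using (hasDerivAt_pow 2 x).sub_const (4*b)
  have h2 : HasDerivAt (fun y => Real.sqrt (y^2 - 4*b)) (x / Real.sqrt (x^2 - 4*b)) x := by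
    have := (Real.hasDerivAt_sqrt h.ne').comp x h1
    refine this.congr_deriv ?_
    field_simp
  have h3 : HasDerivAt (fun y => y + Real.sqrt (y^2 - 4*b))
      (1 + x / Real.sqrt (x^2 - 4*b)) x := (hasDerivAt_id x).add h2
  have hpos : 0 < x + Real.sqrt (x^2 - 4*b) := by positivity
  have h4 := (Real.hasDerivAt_log hpos.ne').comp x h3
  refine h4.congr_deriv ?_
  field_simp
  ring

open Real Set Filter Topology in
private lemma stmt13_tendsto_G (b : ℝ) :
    Tendsto (fun x => Real.log (x + Real.sqrt (x^2 - 4*b)) - Real.log x) atTop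
      (𝓝 (Real.log 2)) := by
  have h1 : Tendsto (fun x : ℝ => 1 + Real.sqrt (1 - 4*b / x^2)) atTop (𝓝 2) := by
    have h0 : Tendsto (fun x : ℝ => 4*b / x^2) atTop (𝓝 0) :=
      Tendsto.div_atTop tendsto_const_nhds (tendsto_pow_atTop two_ne_zero)
    have h5 : Tendsto (fun x : ℝ => 1 - 4*b / x^2) atTop (𝓝 1) := by
      simpa using (tendsto_const_nhds (x := (1:ℝ))).sub h0
    have h6 := ((Real.continuous_sqrt.tendsto 1).comp h5)
    have h2 := (tendsto_const_nhds (x := (1:ℝ))).add h6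
    norm_num at h2
    simpa using h2
  have h2 : Tendsto (fun x : ℝ => Real.log (1 + Real.sqrt (1 - 4*b/x^2))) atTop
      (𝓝 (Real.log 2)) := (Real.continuousAt_log two_ne_zero).tendsto.comp h1
  apply h2.congr'
  filter_upwards [eventually_gt_atTop (0:ℝ), eventually_gt_atTop (max 1 (4*b))] with x hx0 hx1
  have hx2 : 0 < x^2 - 4*b := by
    nlinarith [lt_of_le_of_lt (le_max_left 1 (4*b)) hx1, lt_of_le_of_lt (le_max_right 1 (4*b)) hx1]
  have key : 1 - 4*b/x^2 = (x^2 - 4*b)/x^2 := by field_simp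
  have h7 : Real.sqrt (1 - 4*b/x^2) = Real.sqrt (x^2-4*b) / x := by
    rw [key, Real.sqrt_div hx2.le, Real.sqrt_sq hx0.le]
  rw [h7, ← Real.log_div (by positivity) hx0.ne']
  congr 1
  field_simp

open Real Set Filter Topology in
/-- interval integrability of `1/√(x²-c²)` on `(c,1]` -/
private lemma stmt13_sing {b c : ℝ} (hc : 0 < c) (hc2 : c^2 = 4*b) (hc1 : c ≤ 1) :
    IntervalIntegrable (fun x => 1 / Real.sqrt (x^2 - 4*b)) volume c 1 := by
  rw [intervalIntegrable_iff_integrableOn_Ioc_of_le hc1]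
  have hmaj : IntegrableOn (fun x => (Real.sqrt (2*c))⁻¹ * (x - c) ^ (-(1/2) : ℝ)) (Ioc c 1) := by
    have h1 : IntervalIntegrable (fun x : ℝ => x ^ (-(1/2) : ℝ)) volume 0 (1 - c) :=
      intervalIntegral.intervalIntegrable_rpow' (by norm_num)
    have h2 := (h1.comp_sub_right c).const_mul (Real.sqrt (2*c))⁻¹
    rw [zero_add, sub_add_cancel] at h2
    exact (intervalIntegrable_iff_integrableOn_Ioc_of_le hc1).1 h2
  apply hmaj.mono' ?_ ?_
  · apply Measurable.aestronglyMeasurable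
    exact measurable_const.div (Real.continuous_sqrt.comp (by continuity)).measurable
  · rw [ae_restrict_iff' measurableSet_Ioc]
    refine .of_forall fun x hx => ?_
    obtain ⟨hxc, hx1⟩ := hx
    have hxc' : 0 < x - c := sub_pos.2 hxc
    have key : Real.sqrt (2*c) * Real.sqrt (x - c) ≤ Real.sqrt (x^2 - 4*b) := by
      rw [← Real.sqrt_mul (by positivity)]
      apply Real.sqrt_le_sqrt
      nlinarith
    have hs2 : 0 < Real.sqrt (2*c) * Real.sqrt (x - c) := by positivity
    have hrw : (x - c) ^ (-(1/2) : ℝ) = (Real.sqrt (x - c))⁻¹ := by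
      rw [Real.rpow_neg hxc'.le, Real.sqrt_eq_rpow]
    rw [hrw, Real.norm_eq_abs, abs_of_nonneg (by positivity)]
    rw [← mul_inv, one_div]
    exact inv_anti₀ hs2 key

set_option maxHeartbeats 1000000 in
open Real Set Filter Topology in
/-- For nonzero real `b`,
`∫ (2θ(x²−4b)/√‖x²−4b‖ − (1+sign(log‖x‖))/‖x‖) ‖dx‖ = −log‖b‖`, where `‖x‖ = |x|`,
`‖dx‖ = dx/2` is the normalized Haar measure on `ℝ`, and `θ(a) = 1` iff `a` is a
square (i.e. `a ≥ 0`); the integral is absolutely convergent. -/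
theorem stmt_13 (b : ℝ) (hb : b ≠ 0) :
    Integrable (fun x : ℝ =>
      ((if 0 ≤ x ^ 2 - 4 * b then 2 / Real.sqrt |x ^ 2 - 4 * b| else 0)
        - (1 + Real.sign (Real.log |x|)) / |x|) / 2) ∧
    ∫ x : ℝ,
      ((if 0 ≤ x ^ 2 - 4 * b then 2 / Real.sqrt |x ^ 2 - 4 * b| else 0)
        - (1 + Real.sign (Real.log |x|)) / |x|) / 2
      = - Real.log |b| := by
  have habs : (0:ℝ) < |b| := abs_pos.2 hb
  set F : ℝ → ℝ := fun x : ℝ =>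
      ((if 0 ≤ x ^ 2 - 4 * b then 2 / Real.sqrt |x ^ 2 - 4 * b| else 0)
        - (1 + Real.sign (Real.log |x|)) / |x|) / 2 with hF
  set c : ℝ := 2 * Real.sqrt |b| with hc_def
  have hc : 0 < c := by positivity
  have hc2 : c^2 = 4*|b| := by
    rw [hc_def, mul_pow, Real.sq_sqrt habs.le]; ring
  set A : ℝ := max 1 c with hA_def
  have hA1 : (1:ℝ) ≤ A := le_max_left _ _
  have hcA : c ≤ A := le_max_right _ _
  have hA0 : (0:ℝ) < A := lt_of_lt_of_le one_pos hA1
  set g : ℝ → ℝ := fun x => Real.log (x + Real.sqrt (x^2 - 4*b)) with hg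
  set G : ℝ → ℝ := fun x => g x - Real.log x with hG
  have hFabs : ∀ x : ℝ, F |x| = F x := by
    intro x
    simp only [hF, sq_abs, abs_abs]
  -- generic continuity facts
  have hgContOn : ∀ s : Set ℝ, (∀ x ∈ s, 0 < x + Real.sqrt (x^2 - 4*b)) → ContinuousOn g s := by
    intro s hs
    apply ContinuousOn.log
    · exact (continuous_id.add (Real.continuous_sqrt.comp (by continuity))).continuousOn
    · exact fun x hx => (hs x hx).ne'
  have hGContOn : ∀ s : Set ℝ, (∀ x ∈ s, 0 < x) → ContinuousOn G s := by
    intro s hs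
    apply ContinuousOn.sub
    · apply hgContOn
      intro x hx
      have := Real.sqrt_nonneg (x^2 - 4*b)
      have := hs x hx
      linarith
    · exact ContinuousOn.log continuousOn_id (fun x hx => (hs x hx).ne')
  -- the main reduction
  suffices h : IntegrableOn F (Ioi A) ∧ (∫ x in Ioi A, F x) = Real.log 2 - G A ∧
      IntegrableOn F (Ioc 0 A) ∧ (∫ x in Ioc 0 A, F x) = G A - Real.log c by
    obtain ⟨tint, tval, mint, mval⟩ := h
    have hIoi : IntegrableOn F (Ioi 0) := by
      rw [← Ioc_union_Ioi_eq_Ioi hA0.le]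
      exact mint.union tint
    have hIoiVal : (∫ x in Ioi 0, F x) = Real.log 2 - Real.log c := by
      rw [← Ioc_union_Ioi_eq_Ioi hA0.le,
        setIntegral_union Ioc_disjoint_Ioi_same measurableSet_Ioi mint tint, mval, tval]
      ring
    have hIic : IntegrableOn F (Iic 0) := by
      rw [← Measure.map_neg_eq_self (volume : Measure ℝ)]
      have m : MeasurableEmbedding fun x : ℝ => -x :=
        (Homeomorph.neg ℝ).measurableEmbedding
      rw [m.integrableOn_map_iff]
      have hFneg : (F ∘ fun x : ℝ => -x) = F := by
        funext x
        simp only [Function.comp_apply]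
        rw [← hFabs (-x), abs_neg, hFabs]
      rw [hFneg]
      simp only [neg_preimage, neg_Iic, neg_zero]
      exact (integrableOn_Ici_iff_integrableOn_Ioi).mpr hIoi
    have hInt : Integrable F := by
      rw [← integrableOn_univ, ← Set.Iic_union_Ioi (a := (0:ℝ))]
      exact hIic.union hIoi
    refine ⟨hInt, ?_⟩
    have habs_eq : ∫ x : ℝ, F x = ∫ x : ℝ, F |x| := by
      congr 1; funext x; rw [hFabs]
    rw [show (∫ x : ℝ, F x) = ∫ x : ℝ, F |x| from habs_eq, integral_comp_abs, hIoiVal]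
    have hlogc : Real.log c = Real.log 2 + Real.log |b| / 2 := by
      rw [hc_def, Real.log_mul two_ne_zero (Real.sqrt_ne_zero'.2 habs),
        Real.log_sqrt (abs_nonneg b)]
    rw [hlogc]; ring
  -- tail
  set tf : ℝ → ℝ := fun x => 1 / Real.sqrt (x^2 - 4*b) - 1/x with htf
  have hx2pos : ∀ x ∈ Ioi A, 0 < x^2 - 4*b := by
    intro x hx
    have h1 : c < x := lt_of_le_of_lt hcA hx
    have h2 : 4*b ≤ c^2 := by rw [hc2]; nlinarith [le_abs_self b]
    nlinarith
  have hFtail : EqOn F tf (Ioi A) := by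
    intro x hx
    have hx1 : 1 < x := lt_of_le_of_lt hA1 hx
    have hx0 : 0 < x := lt_trans one_pos hx1
    have h2 := hx2pos x hx
    simp only [hF, htf]
    rw [if_pos h2.le, abs_of_nonneg h2.le, abs_of_pos hx0,
      Real.sign_of_pos (Real.log_pos hx1)]
    ring
  have hGderiv : ∀ x ∈ Ioi A, HasDerivAt G (tf x) x := by
    intro x hx
    have hx0 : 0 < x := lt_trans hA0 hx
    have h := (stmt13_hasDerivAt_g hx0 (hx2pos x hx)).sub (Real.hasDerivAt_log hx0.ne')
    simpa [hG, hg, htf, one_div, Pi.sub_def] using h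
  have hGcont : ContinuousWithinAt G (Ici A) A :=
    (hGContOn (Ici A) (fun x hx => lt_of_lt_of_le hA0 hx)) A self_mem_Ici
  have hGtend : Tendsto G atTop (𝓝 (Real.log 2)) := by
    simpa [hG, hg] using stmt13_tendsto_G b
  have tail : IntegrableOn F (Ioi A) ∧ (∫ x in Ioi A, F x) = Real.log 2 - G A := by
    have key : IntegrableOn tf (Ioi A) ∧ (∫ x in Ioi A, tf x) = Real.log 2 - G A := by
      rcases lt_or_gt_of_ne hb with hbneg | hbpos
      · have hneg : ∀ x ∈ Ioi A, tf x ≤ 0 := by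
          intro x hx
          have hx0 : 0 < x := lt_trans hA0 hx
          have h1 : x ≤ Real.sqrt (x^2 - 4*b) := by
            have h := Real.sqrt_le_sqrt (show x^2 ≤ x^2 - 4*b by nlinarith)
            rwa [Real.sqrt_sq hx0.le] at h
          simp only [htf]
          have := one_div_le_one_div_of_le hx0 h1
          linarith
        exact ⟨integrableOn_Ioi_deriv_of_nonpos hGcont hGderiv hneg hGtend,
          integral_Ioi_of_hasDerivAt_of_nonpos hGcont hGderiv hneg hGtend⟩
      · have hpos : ∀ x ∈ Ioi A, 0 ≤ tf x := by
          intro x hx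
          have hx0 : 0 < x := lt_trans hA0 hx
          have hs : 0 < Real.sqrt (x^2 - 4*b) := Real.sqrt_pos.2 (hx2pos x hx)
          have h1 : Real.sqrt (x^2 - 4*b) ≤ x := by
            have h := Real.sqrt_le_sqrt (show x^2 - 4*b ≤ x^2 by nlinarith)
            rwa [Real.sqrt_sq hx0.le] at h
          simp only [htf]
          have := one_div_le_one_div_of_le hs h1
          linarith
        exact ⟨integrableOn_Ioi_deriv_of_nonneg hGcont hGderiv hpos hGtend,
          integral_Ioi_of_hasDerivAt_of_nonneg hGcont hGderiv hpos hGtend⟩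
    refine ⟨key.1.congr_fun hFtail.symm measurableSet_Ioi, ?_⟩
    rw [setIntegral_congr_fun measurableSet_Ioi hFtail]
    exact key.2
  refine ⟨tail.1, tail.2, ?_⟩
  rcases lt_or_gt_of_ne hb with hbneg | hbpos
  · -- b < 0
    have h4b : ∀ x : ℝ, 0 < x^2 - 4*b := fun x => by nlinarith [sq_nonneg x]
    have contf1 : Continuous (fun x : ℝ => 1 / Real.sqrt (x^2 - 4*b)) := by
      apply Continuous.div continuous_const (Real.continuous_sqrt.comp (by continuity))
      exact fun x => (Real.sqrt_pos.2 (h4b x)).ne'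
    have e1 : EqOn F (fun x => 1 / Real.sqrt (x^2 - 4*b)) (Ioo 0 1) := by
      intro x hx
      obtain ⟨hx0, hx1⟩ := hx
      simp only [hF]
      rw [if_pos (h4b x).le, abs_of_nonneg (h4b x).le, abs_of_pos hx0,
        Real.sign_of_neg (Real.log_neg hx0 hx1)]
      ring
    have hgc1 : ContinuousOn g (Icc 0 1) := by
      apply hgContOn
      intro x hx
      have h := Real.sqrt_pos.2 (h4b x)
      have := hx.1
      linarith
    have v1 : (∫ x in (0:ℝ)..1, 1 / Real.sqrt (x^2 - 4*b)) = g 1 - g 0 :=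
      intervalIntegral.integral_eq_sub_of_hasDeriv_right_of_le zero_le_one hgc1
        (fun x hx => (stmt13_hasDerivAt_g hx.1 (h4b x)).hasDerivWithinAt)
        (contf1.intervalIntegrable 0 1)
    have hg0 : g 0 = Real.log c := by
      have h0 : (0:ℝ)^2 - 4*b = c^2 := by rw [hc2, abs_of_neg hbneg]; ring
      simp only [hg]
      rw [h0, Real.sqrt_sq hc.le, zero_add]
    have e2 : EqOn F (fun x => 1 / Real.sqrt (x^2 - 4*b) - 1/x) (Ioo 1 A) := by
      intro x hx
      have hx1 : 1 < x := hx.1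
      have hx0 : 0 < x := lt_trans one_pos hx1
      simp only [hF]
      rw [if_pos (h4b x).le, abs_of_nonneg (h4b x).le, abs_of_pos hx0,
        Real.sign_of_pos (Real.log_pos hx1)]
      ring
    have cont2 : ContinuousOn (fun x : ℝ => 1 / Real.sqrt (x^2 - 4*b) - 1/x) (Icc 1 A) := by
      apply contf1.continuousOn.sub
      apply ContinuousOn.div continuousOn_const continuousOn_id
      exact fun x hx => ne_of_gt (lt_of_lt_of_le one_pos hx.1)
    have hii2 : IntervalIntegrable (fun x : ℝ => 1 / Real.sqrt (x^2 - 4*b) - 1/x) volume 1 A := by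
      apply ContinuousOn.intervalIntegrable
      rwa [uIcc_of_le hA1]
    have hGc2 : ContinuousOn G (Icc 1 A) := hGContOn _ (fun x hx => lt_of_lt_of_le one_pos hx.1)
    have v2 : (∫ x in (1:ℝ)..A, (1 / Real.sqrt (x^2 - 4*b) - 1/x)) = G A - G 1 := by
      apply intervalIntegral.integral_eq_sub_of_hasDeriv_right_of_le hA1 hGc2 ?_ hii2
      intro x hx
      have hx0 : 0 < x := lt_trans one_pos hx.1
      have h := (stmt13_hasDerivAt_g hx0 (h4b x)).sub (Real.hasDerivAt_log hx0.ne')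
      exact (by simpa [hG, hg, one_div, Pi.sub_def] using h : HasDerivAt G (1 / Real.sqrt (x^2-4*b) - 1/x) x).hasDerivWithinAt
    have i1 : IntegrableOn F (Ioc 0 1) := by
      rw [integrableOn_Ioc_iff_integrableOn_Ioo]
      exact ((contf1.integrableOn_Ioc).mono_set Ioo_subset_Ioc_self).congr_fun
        e1.symm measurableSet_Ioo
    have i2 : IntegrableOn F (Ioc 1 A) := by
      rw [integrableOn_Ioc_iff_integrableOn_Ioo]
      exact (((intervalIntegrable_iff_integrableOn_Ioc_of_le hA1).1 hii2).mono_set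
        Ioo_subset_Ioc_self).congr_fun e2.symm measurableSet_Ioo
    have ival1 : ∫ x in Ioc 0 1, F x = g 1 - Real.log c := by
      rw [integral_Ioc_eq_integral_Ioo, setIntegral_congr_fun measurableSet_Ioo e1,
        ← integral_Ioc_eq_integral_Ioo, ← intervalIntegral.integral_of_le zero_le_one, v1, hg0]
    have ival2 : ∫ x in Ioc 1 A, F x = G A - g 1 := by
      rw [integral_Ioc_eq_integral_Ioo, setIntegral_congr_fun measurableSet_Ioo e2,
        ← integral_Ioc_eq_integral_Ioo, ← intervalIntegral.integral_of_le hA1, v2]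
      simp [hG, Real.log_one]
    constructor
    · rw [← Ioc_union_Ioc_eq_Ioc zero_le_one hA1]; exact i1.union i2
    · rw [← Ioc_union_Ioc_eq_Ioc zero_le_one hA1,
        setIntegral_union (Ioc_disjoint_Ioc_of_le le_rfl) measurableSet_Ioc i1 i2, ival1, ival2]
      ring
  · -- b > 0
    have hc2' : c^2 = 4*b := by rw [hc2, abs_of_pos hbpos]
    have hgc_eq : g c = Real.log c := by
      simp only [hg]
      rw [show c^2 - 4*b = 0 by rw [hc2']; ring, Real.sqrt_zero, add_zero]
    rcases le_or_gt c 1 with hc1 | hc1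
    · -- c ≤ 1, A = 1
      have hA' : A = 1 := max_eq_left hc1
      have e0 : EqOn F (fun _ => (0:ℝ)) (Ioo 0 c) := by
        intro x hx
        obtain ⟨hx0, hxc⟩ := hx
        have hcond : ¬ (0 ≤ x^2 - 4*b) := by push_neg; nlinarith
        have hx1 : x < 1 := lt_of_lt_of_le hxc hc1
        simp only [hF]
        rw [if_neg hcond, abs_of_pos hx0, Real.sign_of_neg (Real.log_neg hx0 hx1)]
        ring
      have i0 : IntegrableOn F (Ioc 0 c) := by
        rw [integrableOn_Ioc_iff_integrableOn_Ioo]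
        exact (integrableOn_zero).congr_fun e0.symm measurableSet_Ioo
      have ival0 : ∫ x in Ioc 0 c, F x = 0 := by
        rw [integral_Ioc_eq_integral_Ioo, setIntegral_congr_fun measurableSet_Ioo e0]
        simp
      have hii := stmt13_sing hc hc2' hc1
      have e3 : EqOn F (fun x => 1 / Real.sqrt (x^2 - 4*b)) (Ioo c 1) := by
        intro x hx
        obtain ⟨hxc, hx1⟩ := hx
        have hx0 : 0 < x := lt_trans hc hxc
        have hcond : 0 ≤ x^2 - 4*b := by nlinarith
        simp only [hF]
        rw [if_pos hcond, abs_of_nonneg hcond, abs_of_pos hx0,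
          Real.sign_of_neg (Real.log_neg hx0 hx1)]
        ring
      have hgc3 : ContinuousOn g (Icc c 1) := by
        apply hgContOn
        intro x hx
        have h := Real.sqrt_nonneg (x^2 - 4*b)
        have := hx.1
        linarith
      have v3 : (∫ x in c..(1:ℝ), 1 / Real.sqrt (x^2 - 4*b)) = g 1 - g c := by
        apply intervalIntegral.integral_eq_sub_of_hasDeriv_right_of_le hc1 hgc3 ?_ hii
        intro x hx
        exact (stmt13_hasDerivAt_g (lt_trans hc hx.1)
          (by nlinarith [hx.1] : 0 < x^2 - 4*b)).hasDerivWithinAt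
      have i3 : IntegrableOn F (Ioc c 1) := by
        rw [integrableOn_Ioc_iff_integrableOn_Ioo]
        exact (((intervalIntegrable_iff_integrableOn_Ioc_of_le hc1).1 hii).mono_set
          Ioo_subset_Ioc_self).congr_fun e3.symm measurableSet_Ioo
      have ival3 : ∫ x in Ioc c 1, F x = g 1 - Real.log c := by
        rw [integral_Ioc_eq_integral_Ioo, setIntegral_congr_fun measurableSet_Ioo e3,
          ← integral_Ioc_eq_integral_Ioo, ← intervalIntegral.integral_of_le hc1, v3, hgc_eq]
      constructor
      · rw [hA', ← Ioc_union_Ioc_eq_Ioc hc.le hc1]; exact i0.union i3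
      · rw [hA', ← Ioc_union_Ioc_eq_Ioc hc.le hc1,
          setIntegral_union (Ioc_disjoint_Ioc_of_le le_rfl) measurableSet_Ioc i0 i3, ival0, ival3]
        simp [hG, Real.log_one]
    · -- 1 < c, A = c
      have hA' : A = c := max_eq_right hc1.le
      have e0 : EqOn F (fun _ => (0:ℝ)) (Ioo 0 1) := by
        intro x hx
        obtain ⟨hx0, hx1⟩ := hx
        have hcond : ¬ (0 ≤ x^2 - 4*b) := by push_neg; nlinarith
        simp only [hF]
        rw [if_neg hcond, abs_of_pos hx0, Real.sign_of_neg (Real.log_neg hx0 hx1)]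
        ring
      have i0 : IntegrableOn F (Ioc 0 1) := by
        rw [integrableOn_Ioc_iff_integrableOn_Ioo]
        exact (integrableOn_zero).congr_fun e0.symm measurableSet_Ioo
      have ival0 : ∫ x in Ioc 0 1, F x = 0 := by
        rw [integral_Ioc_eq_integral_Ioo, setIntegral_congr_fun measurableSet_Ioo e0]
        simp
      have e5 : EqOn F (fun x => -(1/x)) (Ioo 1 c) := by
        intro x hx
        obtain ⟨hx1, hxc⟩ := hx
        have hx0 : 0 < x := lt_trans one_pos hx1
        have hcond : ¬ (0 ≤ x^2 - 4*b) := by push_neg; nlinarith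
        simp only [hF]
        rw [if_neg hcond, abs_of_pos hx0, Real.sign_of_pos (Real.log_pos hx1)]
        ring
      have cont5 : ContinuousOn (fun x : ℝ => -(1/x)) (Icc 1 c) := by
        apply ContinuousOn.neg
        apply ContinuousOn.div continuousOn_const continuousOn_id
        exact fun x hx => ne_of_gt (lt_of_lt_of_le one_pos hx.1)
      have hii5 : IntervalIntegrable (fun x : ℝ => -(1/x)) volume 1 c := by
        apply ContinuousOn.intervalIntegrable
        rwa [uIcc_of_le hc1.le]
      have cont5' : ContinuousOn (fun x : ℝ => -Real.log x) (Icc 1 c) := by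
        apply ContinuousOn.neg
        exact ContinuousOn.log continuousOn_id
          (fun x hx => ne_of_gt (lt_of_lt_of_le one_pos hx.1))
      have v5 : (∫ x in (1:ℝ)..c, -(1/x)) = -Real.log c - -Real.log 1 := by
        apply intervalIntegral.integral_eq_sub_of_hasDeriv_right_of_le hc1.le cont5' ?_ hii5
        intro x hx
        have hx0 : 0 < x := lt_trans one_pos hx.1
        have h := (Real.hasDerivAt_log hx0.ne').neg
        exact (by simpa [one_div, Pi.neg_def] using h :
          HasDerivAt (fun x : ℝ => -Real.log x) (-(1/x)) x).hasDerivWithinAt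
      have i5 : IntegrableOn F (Ioc 1 c) := by
        rw [integrableOn_Ioc_iff_integrableOn_Ioo]
        exact (((intervalIntegrable_iff_integrableOn_Ioc_of_le hc1.le).1 hii5).mono_set
          Ioo_subset_Ioc_self).congr_fun e5.symm measurableSet_Ioo
      have ival5 : ∫ x in Ioc 1 c, F x = -Real.log c := by
        rw [integral_Ioc_eq_integral_Ioo, setIntegral_congr_fun measurableSet_Ioo e5,
          ← integral_Ioc_eq_integral_Ioo, ← intervalIntegral.integral_of_le hc1.le, v5]
        simp
      constructor
      · rw [hA', ← Ioc_union_Ioc_eq_Ioc zero_le_one hc1.le]; exact i0.union i5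
      · rw [hA', ← Ioc_union_Ioc_eq_Ioc zero_le_one hc1.le,
          setIntegral_union (Ioc_disjoint_Ioc_of_le le_rfl) measurableSet_Ioc i0 i5, ival0, ival5]
        simp [hG, hgc_eq]
end

section
/- Let P be a monic cubic polynomial in z over ℂ. In the fraction field of the Weyl algebra ℂ[z, ∂] (equivalently, interpreted as an identity of well-defined commutators in ℂ[z,∂]), one has [2 log ∂ + log P, ∂P∂ + z] = 0; concretely, the commutators A := [2 log ∂, ∂P∂ + z] and B := [log P, ∂P∂ + z], each of which is a well-defined element of the Weyl algebra, satisfy A + B = 0. -/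
/-- In (an extension of) the Weyl algebra `ℂ[z, ∂]` with `[∂, z] = 1`, for a monic
cubic `P(z) = z³ + a z² + b z + c`, the commutators `A = [2 log ∂, ∂P∂ + z]` and
`B = [log P, ∂P∂ + z]` satisfy `A + B = 0`, i.e. `[2 log ∂ + log P, ∂P∂ + z] = 0`.
Here `ld` plays the role of `log ∂` (characterized by `[ld, ∂] = 0`, `[ld, z] = ∂⁻¹`)
and `lP` that of `log P` (characterized by `[lP, z] = 0`, `[∂, lP] = P′·P⁻¹`). -/
theorem stmt_18 {Ω : Type*} [Ring Ω] [Algebra ℂ Ω]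
    (z d dinv ld lP P P' Pinv : Ω) (a b c : ℂ)
    (hP : P = z ^ 3 + a • z ^ 2 + b • z + algebraMap ℂ Ω c)
    (hP' : P' = 3 * z ^ 2 + (2 * a) • z + algebraMap ℂ Ω b)
    (hdz : d * z - z * d = 1)
    (hd1 : d * dinv = 1) (hd2 : dinv * d = 1)
    (hPinv1 : P * Pinv = 1) (hPinv2 : Pinv * P = 1)
    (hldd : ld * d = d * ld)
    (hldz : ld * z - z * ld = dinv)
    (hlPz : lP * z = z * lP)
    (hlPd : d * lP - lP * d = P' * Pinv) :
    (2 * ld + lP) * (d * P * d + z) - (d * P * d + z) * (2 * ld + lP) = 0 := by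
  rw [sub_eq_iff_eq_add] at hdz hldz hlPd
  have hdz' : d * z = z * d + 1 := by rw [hdz]; exact add_comm _ _
  have hldz' : ld * z = z * ld + dinv := by rw [hldz]; exact add_comm _ _
  have hlPd' : lP * d = d * ld * 0 + (d * lP - P' * Pinv) := by
    rw [hlPd]; noncomm_ring
  have hlPd'' : lP * d = d * lP - P' * Pinv := by rw [hlPd']; noncomm_ring
  -- commutation of `dinv` with `z`
  have hdinvz : dinv * z = z * dinv - dinv * dinv := by
    have h3 : z * dinv = dinv * z + dinv * dinv := by
      calc z * dinv = dinv * (d * z) * dinv := by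
            rw [← mul_assoc dinv d z, hd2, one_mul]
        _ = dinv * (z * d + 1) * dinv := by rw [hdz']
        _ = dinv * z * (d * dinv) + dinv * dinv := by noncomm_ring
        _ = dinv * z + dinv * dinv := by rw [hd1, mul_one]
    rw [h3]; abel
  -- `lP` commutes with polynomials in `z`
  have hlPz2 : lP * z ^ 2 = z ^ 2 * lP := by
    calc lP * z ^ 2 = (lP * z) * z := by noncomm_ring
      _ = (z * lP) * z := by rw [hlPz]
      _ = z * (lP * z) := by noncomm_ring
      _ = z * (z * lP) := by rw [hlPz]
      _ = z ^ 2 * lP := by noncomm_ring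
  have hlPz3 : lP * z ^ 3 = z ^ 3 * lP := by
    calc lP * z ^ 3 = (lP * z ^ 2) * z := by noncomm_ring
      _ = (z ^ 2 * lP) * z := by rw [hlPz2]
      _ = z ^ 2 * (lP * z) := by noncomm_ring
      _ = z ^ 2 * (z * lP) := by rw [hlPz]
      _ = z ^ 3 * lP := by noncomm_ring
  have hlPP : lP * P = P * lP := by
    rw [hP, Algebra.algebraMap_eq_smul_one]
    calc lP * (z ^ 3 + a • z ^ 2 + b • z + c • (1 : Ω))
        = lP * z ^ 3 + a • (lP * z ^ 2) + b • (lP * z) + c • lP := by noncomm_ring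
      _ = z ^ 3 * lP + a • (z ^ 2 * lP) + b • (z * lP) + c • lP := by
          rw [hlPz3, hlPz2, hlPz]
      _ = (z ^ 3 + a • z ^ 2 + b • z + c • (1 : Ω)) * lP := by noncomm_ring
  have hPP' : P * P' = P' * P := by
    rw [hP, hP', Algebra.algebraMap_eq_smul_one, Algebra.algebraMap_eq_smul_one]
    noncomm_ring
    module
  -- `B = [lP, dPd] = dPd·lP − dP′ − P′d`
  have hB : lP * (d * P * d) = d * P * d * lP - d * P' - P' * d := by
    calc lP * (d * P * d) = (lP * d) * P * d := by noncomm_ring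
      _ = (d * lP - P' * Pinv) * P * d := by rw [hlPd'']
      _ = d * (lP * P) * d - P' * (Pinv * P) * d := by noncomm_ring
      _ = d * (P * lP) * d - P' * d := by rw [hlPP, hPinv2, mul_one]
      _ = d * P * (lP * d) - P' * d := by noncomm_ring
      _ = d * P * (d * lP - P' * Pinv) - P' * d := by rw [hlPd'']
      _ = d * P * d * lP - d * (P * P') * Pinv - P' * d := by noncomm_ring
      _ = d * P * d * lP - d * (P' * P) * Pinv - P' * d := by rw [hPP']
      _ = d * P * d * lP - d * P' * (P * Pinv) - P' * d := by noncomm_ring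
      _ = d * P * d * lP - d * P' - P' * d := by rw [hPinv1, mul_one]
  -- `[ld, P]`
  have hldz2 : ld * z ^ 2 = z ^ 2 * ld + (dinv * z + z * dinv) := by
    calc ld * z ^ 2 = (ld * z) * z := by noncomm_ring
      _ = (z * ld + dinv) * z := by rw [hldz']
      _ = z * (ld * z) + dinv * z := by noncomm_ring
      _ = z * (z * ld + dinv) + dinv * z := by rw [hldz']
      _ = z ^ 2 * ld + (dinv * z + z * dinv) := by noncomm_ring
  have hldz3 : ld * z ^ 3 = z ^ 3 * ld + (dinv * z ^ 2 + z * (dinv * z) + z ^ 2 * dinv) := by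
    calc ld * z ^ 3 = (ld * z ^ 2) * z := by noncomm_ring
      _ = (z ^ 2 * ld + (dinv * z + z * dinv)) * z := by rw [hldz2]
      _ = z ^ 2 * (ld * z) + dinv * z * z + z * (dinv * z) := by noncomm_ring
      _ = z ^ 2 * (z * ld + dinv) + dinv * z * z + z * (dinv * z) := by rw [hldz']
      _ = z ^ 3 * ld + (dinv * z ^ 2 + z * (dinv * z) + z ^ 2 * dinv) := by noncomm_ring
  have hldP : ld * P - P * ld
      = (dinv * z ^ 2 + z * (dinv * z) + z ^ 2 * dinv)
        + a • (dinv * z + z * dinv) + b • dinv := by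
    rw [hP, Algebra.algebraMap_eq_smul_one]
    calc ld * (z ^ 3 + a • z ^ 2 + b • z + c • (1 : Ω))
          - (z ^ 3 + a • z ^ 2 + b • z + c • (1 : Ω)) * ld
        = (ld * z ^ 3 - z ^ 3 * ld) + a • (ld * z ^ 2 - z ^ 2 * ld)
            + b • (ld * z - z * ld) := by noncomm_ring; module
      _ = ((z ^ 3 * ld + (dinv * z ^ 2 + z * (dinv * z) + z ^ 2 * dinv)) - z ^ 3 * ld)
            + a • ((z ^ 2 * ld + (dinv * z + z * dinv)) - z ^ 2 * ld)
            + b • ((z * ld + dinv) - z * ld) := by rw [hldz3, hldz2, hldz']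
      _ = (dinv * z ^ 2 + z * (dinv * z) + z ^ 2 * dinv)
            + a • (dinv * z + z * dinv) + b • dinv := by
          noncomm_ring
  -- the six elementary `d ⬝ d` conjugations
  have t1 : d * (dinv * z ^ 2) * d = z ^ 2 * d := by
    calc d * (dinv * z ^ 2) * d = (d * dinv) * (z ^ 2 * d) := by noncomm_ring
      _ = z ^ 2 * d := by rw [hd1, one_mul]
  have t2 : d * (z * (dinv * z)) * d = z ^ 2 * d + z - dinv := by
    calc d * (z * (dinv * z)) * d = (d * z) * ((dinv * z) * d) := by noncomm_ring
      _ = (z * d + 1) * ((z * dinv - dinv * dinv) * d) := by rw [hdz', hdinvz]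
      _ = z * (d * z) * (dinv * d) - z * (d * dinv) * (dinv * d)
            + z * (dinv * d) - dinv * (dinv * d) := by noncomm_ring
      _ = z * (z * d + 1) * 1 - z * 1 * 1 + z * 1 - dinv * 1 := by
          rw [hdz', hd1, hd2]
      _ = z ^ 2 * d + z - dinv := by noncomm_ring
  have t3 : d * (z ^ 2 * dinv) * d = z ^ 2 * d + 2 * z := by
    calc d * (z ^ 2 * dinv) * d = (d * z) * z * (dinv * d) := by noncomm_ring
      _ = (z * d + 1) * z * 1 := by rw [hdz', hd2]
      _ = z * (d * z) + z := by noncomm_ring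
      _ = z * (z * d + 1) + z := by rw [hdz']
      _ = z ^ 2 * d + 2 * z := by noncomm_ring
  have t4 : d * (dinv * z) * d = z * d := by
    calc d * (dinv * z) * d = (d * dinv) * (z * d) := by noncomm_ring
      _ = z * d := by rw [hd1, one_mul]
  have t5 : d * (z * dinv) * d = z * d + 1 := by
    calc d * (z * dinv) * d = (d * z) * (dinv * d) := by noncomm_ring
      _ = (z * d + 1) * 1 := by rw [hdz', hd2]
      _ = z * d + 1 := by rw [mul_one]
  have t6 : d * dinv * d = d := by rw [hd1, one_mul]
  -- move `ld` through `d`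
  have hswap : ld * (d * P * d) = d * (ld * P) * d := by
    calc ld * (d * P * d) = (ld * d) * (P * d) := by noncomm_ring
      _ = (d * ld) * (P * d) := by rw [hldd]
      _ = d * (ld * P) * d := by noncomm_ring
  have hswap2 : (d * P * d) * ld = d * (P * ld) * d := by
    calc (d * P * d) * ld = (d * P) * (d * ld) := by noncomm_ring
      _ = (d * P) * (ld * d) := by rw [hldd]
      _ = d * (P * ld) * d := by noncomm_ring
  -- `A = [ld, dPd + z]`
  have hAcomm : ld * (d * P * d + z) - (d * P * d + z) * ld
      = (z ^ 2 * d) + (z ^ 2 * d + z - dinv) + (z ^ 2 * d + 2 * z)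
        + a • ((z * d) + (z * d + 1)) + b • d + dinv := by
    calc ld * (d * P * d + z) - (d * P * d + z) * ld
        = (d * (ld * P) * d - d * (P * ld) * d) + (ld * z - z * ld) := by
          rw [← hswap, ← hswap2]; noncomm_ring
      _ = (d * (ld * P) * d - d * (P * ld) * d) + ((z * ld + dinv) - z * ld) := by
          rw [hldz']
      _ = d * (ld * P - P * ld) * d + dinv := by noncomm_ring
      _ = d * ((dinv * z ^ 2 + z * (dinv * z) + z ^ 2 * dinv)
              + a • (dinv * z + z * dinv) + b • dinv) * d + dinv := by rw [hldP]
      _ = (d * (dinv * z ^ 2) * d + d * (z * (dinv * z)) * d + d * (z ^ 2 * dinv) * d)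
            + a • (d * (dinv * z) * d + d * (z * dinv) * d)
            + b • (d * dinv * d) + dinv := by noncomm_ring
      _ = (z ^ 2 * d) + (z ^ 2 * d + z - dinv) + (z ^ 2 * d + 2 * z)
            + a • ((z * d) + (z * d + 1)) + b • d + dinv := by
          rw [t1, t2, t3, t4, t5, t6]
  -- `B = [lP, dPd + z]`
  have hBcomm : lP * (d * P * d + z) - (d * P * d + z) * lP
      = -(d * P') - P' * d := by
    calc lP * (d * P * d + z) - (d * P * d + z) * lP
        = (lP * (d * P * d) - (d * P * d) * lP) + (lP * z - z * lP) := by noncomm_ring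
      _ = ((d * P * d * lP - d * P' - P' * d) - (d * P * d) * lP)
            + (z * lP - z * lP) := by rw [hB, hlPz]
      _ = -(d * P') - P' * d := by noncomm_ring
  -- expansions of `dP′` and `P′d`
  have hdz2 : d * z ^ 2 = z ^ 2 * d + 2 * z := by
    calc d * z ^ 2 = (d * z) * z := by noncomm_ring
      _ = (z * d + 1) * z := by rw [hdz']
      _ = z * (d * z) + z := by noncomm_ring
      _ = z * (z * d + 1) + z := by rw [hdz']
      _ = z ^ 2 * d + 2 * z := by noncomm_ring
  have hP'd : P' * d = 3 * (z ^ 2 * d) + (2 * a) • (z * d) + b • d := by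
    rw [hP', Algebra.algebraMap_eq_smul_one]
    noncomm_ring
  have hdP' : d * P'
      = 3 * (z ^ 2 * d) + 6 * z + (2 * a) • (z * d) + (2 * a) • (1 : Ω) + b • d := by
    calc d * P' = 3 * (d * z ^ 2) + (2 * a) • (d * z) + b • d := by
          rw [hP', Algebra.algebraMap_eq_smul_one]; noncomm_ring
      _ = 3 * (z ^ 2 * d + 2 * z) + (2 * a) • (z * d + 1) + b • d := by
          rw [hdz2, hdz']
      _ = 3 * (z ^ 2 * d) + 6 * z + (2 * a) • (z * d) + (2 * a) • (1 : Ω) + b • d := by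
          noncomm_ring; module
  -- final assembly
  calc (2 * ld + lP) * (d * P * d + z) - (d * P * d + z) * (2 * ld + lP)
      = 2 * (ld * (d * P * d + z) - (d * P * d + z) * ld)
        + (lP * (d * P * d + z) - (d * P * d + z) * lP) := by noncomm_ring
    _ = 2 * ((z ^ 2 * d) + (z ^ 2 * d + z - dinv) + (z ^ 2 * d + 2 * z)
            + a • ((z * d) + (z * d + 1)) + b • d + dinv)
          + (-(d * P') - P' * d) := by rw [hAcomm, hBcomm]
    _ = 2 * ((z ^ 2 * d) + (z ^ 2 * d + z - dinv) + (z ^ 2 * d + 2 * z)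
            + a • ((z * d) + (z * d + 1)) + b • d + dinv)
          + (-(3 * (z ^ 2 * d) + 6 * z + (2 * a) • (z * d) + (2 * a) • (1 : Ω) + b • d)
            - (3 * (z ^ 2 * d) + (2 * a) • (z * d) + b • d)) := by rw [hdP', hP'd]
    _ = 0 := by
        noncomm_ring
        match_scalars <;> (try simp only [nsmul_eq_mul, zsmul_eq_mul]) <;> ring
end

section
/- The discriminant in z of the quartic polynomial P_{t,x}(z) := (t − z²)² − 4z(z−1)(z−t)x equals 2^{12}·(x(x−1)t(t−1)(x−t))², for all t, x in any field of characteristic 0 (as a polynomial identity). -/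
set_option maxHeartbeats 4000000

/-- The discriminant in `z` of `P_{t,x}(z) = (t − z²)² − 4x·z(z−1)(z−t)` equals
`2¹²·(x(x−1)t(t−1)(x−t))²`: if `P_{t,x}` factors as `∏ (z − rᵢ)` over a field of
characteristic 0, then `∏_{i<j} (rᵢ − rⱼ)² = 2¹²·(x(x−1)t(t−1)(x−t))²`. -/
theorem stmt_19 {K : Type*} [Field K] [CharZero K] (t x : K) (r : Fin 4 → K)
    (hfact : ∀ z : K,
      (t - z ^ 2) ^ 2 - 4 * x * (z * (z - 1) * (z - t)) = ∏ i, (z - r i)) :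
    (∏ i : Fin 4, ∏ j ∈ Finset.Ioi i, (r i - r j) ^ 2)
      = 2 ^ 12 * (x * (x - 1) * t * (t - 1) * (x - t)) ^ 2 := by
  have h0 := hfact 0
  have h1 := hfact 1
  have hm1 := hfact (-1)
  have h2 := hfact 2
  have hm2 := hfact (-2)
  simp only [Fin.prod_univ_four] at h0 h1 hm1 h2 hm2
  have hE1 : r 0 + r 1 + r 2 + r 3 = 4 * x := by
    linear_combination (-1/6 : K) * h1 + (1/6 : K) * hm1 + (1/12 : K) * h2 + (-1/12 : K) * hm2
  have hE2 : r 0 * r 1 + r 0 * r 2 + r 0 * r 3 + r 1 * r 2 + r 1 * r 3 + r 2 * r 3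
      = 4 * x + 4 * x * t - 2 * t := by
    linear_combination (-1/2 : K) * h1 + (-1/2 : K) * hm1 + (1 : K) * h0
  have hE3 : r 0 * r 1 * r 2 + r 0 * r 1 * r 3 + r 0 * r 2 * r 3 + r 1 * r 2 * r 3
      = 4 * x * t := by
    linear_combination (2/3 : K) * h1 + (-2/3 : K) * hm1 + (-1/12 : K) * h2 + (1/12 : K) * hm2
  have hE4 : r 0 * r 1 * r 2 * r 3 = t ^ 2 := by
    linear_combination (-1 : K) * h0
  have hIoi0 : Finset.Ioi (0 : Fin 4) = {1, 2, 3} := by decide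
  have hIoi1 : Finset.Ioi (1 : Fin 4) = {2, 3} := by decide
  have hIoi2 : Finset.Ioi (2 : Fin 4) = {3} := by decide
  have hIoi3 : Finset.Ioi (3 : Fin 4) = ∅ := by decide
  rw [Fin.prod_univ_four, hIoi0, hIoi1, hIoi2, hIoi3]
  have hp0 : (∏ j ∈ ({1, 2, 3} : Finset (Fin 4)), (r 0 - r j) ^ 2)
      = (r 0 - r 1) ^ 2 * ((r 0 - r 2) ^ 2 * (r 0 - r 3) ^ 2) := by
    rw [Finset.prod_insert (by decide), Finset.prod_insert (by decide),
      Finset.prod_singleton]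
  have hp1 : (∏ j ∈ ({2, 3} : Finset (Fin 4)), (r 1 - r j) ^ 2)
      = (r 1 - r 2) ^ 2 * (r 1 - r 3) ^ 2 := by
    rw [Finset.prod_insert (by decide), Finset.prod_singleton]
  rw [hp0, hp1, Finset.prod_singleton, Finset.prod_empty]
  linear_combination ((4 : K) * r 1^2 * r 2^4 * r 3^4 * x + r 1^2 * r 2^4 * r 3^5 + r 1^2 * r 2^5 * r 3^4 + (-64 : K) * r 1^3 * r 2^3 * r 3^3 * x^2 + (-8 : K) * r 1^3 * r 2^3 * r 3^4 * x + (-2 : K) * r 1^3 * r 2^3 * r 3^5 + (-8 : K) * r 1^3 * r 2^4 * r 3^3 * x + (15 : K) * r 1^3 * r 2^4 * r 3^4 + (-2 : K) * r 1^3 * r 2^5 * r 3^3 + (4 : K) * r 1^4 * r 2^2 * r 3^4 * x + r 1^4 * r 2^2 * r 3^5 + (-8 : K) * r 1^4 * r 2^3 * r 3^3 * x + (15 : K) * r 1^4 * r 2^3 * r 3^4 + (4 : K) * r 1^4 * r 2^4 * r 3^2 * x + (15 : K) * r 1^4 * r 2^4 * r 3^3 + r 1^4 * r 2^5 * r 3^2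 + r 1^5 * r 2^2 * r 3^4 + (-2 : K) * r 1^5 * r 2^3 * r 3^3 + r 1^5 * r 2^4 * r 3^2 + (-8 : K) * r 0 * r 1 * r 2^4 * r 3^4 * x + (-2 : K) * r 0 * r 1 * r 2^4 * r 3^5 + (-2 : K) * r 0 * r 1 * r 2^5 * r 3^4 + (96 : K) * r 0 * r 1^2 * r 2^3 * r 3^3 * x^2 + (8 : K) * r 0 * r 1^2 * r 2^3 * r 3^4 * x + (2 : K) * r 0 * r 1^2 * r 2^3 * r 3^5 + (8 : K) * r 0 * r 1^2 * r 2^4 * r 3^3 * x + (-23 : K) * r 0 * r 1^2 * r 2^4 * r 3^4 + (2 : K) * r 0 * r 1^2 * r 2^5 * r 3^3 + (96 : K) * r 0 * r 1^3 * r 2^2 * r 3^3 * x^2 + (8 : K) * r 0 * r 1^3 * r 2^2 * r 3^4 * x + (2 : K) * r 0 * r 1^3 * r 2^2 * r 3^5 + (96 : K) * r 0 * r 1^3 * r 2^3 * r 3^2 * x^2 + (8 : K) * r 0 * r 1^3 * r 2^3 * r 3^3 * x + (-30 : K) * r 0 * r 1^3 * r 2^3 * r 3^4 + (8 : K) * r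 0 * r 1^3 * r 2^4 * r 3^2 * x + (-30 : K) * r 0 * r 1^3 * r 2^4 * r 3^3 + (2 : K) * r 0 * r 1^3 * r 2^5 * r 3^2 + (-8 : K) * r 0 * r 1^4 * r 2 * r 3^4 * x + (-2 : K) * r 0 * r 1^4 * r 2 * r 3^5 + (8 : K) * r 0 * r 1^4 * r 2^2 * r 3^3 * x + (-23 : K) * r 0 * r 1^4 * r 2^2 * r 3^4 + (8 : K) * r 0 * r 1^4 * r 2^3 * r 3^2 * x + (-30 : K) * r 0 * r 1^4 * r 2^3 * r 3^3 + (-8 : K) * r 0 * r 1^4 * r 2^4 * r 3 * x + (-23 : K) * r 0 * r 1^4 * r 2^4 * r 3^2 + (-2 : K) * r 0 * r 1^4 * r 2^5 * r 3 + (-2 : K) * r 0 * r 1^5 * r 2 * r 3^4 + (2 : K) * r 0 * r 1^5 * r 2^2 * r 3^3 + (2 : K) * r 0 * r 1^5 * r 2^3 * r 3^2 + (-2 : K) * r 0 * r 1^5 * r 2^4 * r 3 + (4 : K) * r 0^2 * r 2^4 * r 3^4 * x + r 0^2 * r 2^4 * r 3^5 + r 0^2 * r 2^5 * r 3^4 +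 (96 : K) * r 0^2 * r 1 * r 2^3 * r 3^3 * x^2 + (8 : K) * r 0^2 * r 1 * r 2^3 * r 3^4 * x + (2 : K) * r 0^2 * r 1 * r 2^3 * r 3^5 + (8 : K) * r 0^2 * r 1 * r 2^4 * r 3^3 * x + (-23 : K) * r 0^2 * r 1 * r 2^4 * r 3^4 + (2 : K) * r 0^2 * r 1 * r 2^5 * r 3^3 + (-1728 : K) * r 0^2 * r 1^2 * r 2^2 * r 3^2 * x^3 + (48 : K) * r 0^2 * r 1^2 * r 2^2 * r 3^3 * x^2 + (-24 : K) * r 0^2 * r 1^2 * r 2^2 * r 3^4 * x + (-6 : K) * r 0^2 * r 1^2 * r 2^2 * r 3^5 + (48 : K) * r 0^2 * r 1^2 * r 2^3 * r 3^2 * x^2 + (496 : K) * r 0^2 * r 1^2 * r 2^3 * r 3^3 * x + (-62 : K) * r 0^2 * r 1^2 * r 2^3 * r 3^4 + (-24 : K) * r 0^2 * r 1^2 * r 2^4 * r 3^2 * x + (-62 : K) * r 0^2 * r 1^2 * r 2^4 * r 3^3 + (-6 : K) * r 0^2 * r 1^2 * r 2^5 * r 3^2 + (96 : K) * r 0^2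 * r 1^3 * r 2 * r 3^3 * x^2 + (8 : K) * r 0^2 * r 1^3 * r 2 * r 3^4 * x + (2 : K) * r 0^2 * r 1^3 * r 2 * r 3^5 + (48 : K) * r 0^2 * r 1^3 * r 2^2 * r 3^2 * x^2 + (496 : K) * r 0^2 * r 1^3 * r 2^2 * r 3^3 * x + (-62 : K) * r 0^2 * r 1^3 * r 2^2 * r 3^4 + (96 : K) * r 0^2 * r 1^3 * r 2^3 * r 3 * x^2 + (496 : K) * r 0^2 * r 1^3 * r 2^3 * r 3^2 * x + (-292 : K) * r 0^2 * r 1^3 * r 2^3 * r 3^3 + (8 : K) * r 0^2 * r 1^3 * r 2^4 * r 3 * x + (-62 : K) * r 0^2 * r 1^3 * r 2^4 * r 3^2 + (2 : K) * r 0^2 * r 1^3 * r 2^5 * r 3 + (4 : K) * r 0^2 * r 1^4 * r 3^4 * x + r 0^2 * r 1^4 * r 3^5 + (8 : K) * r 0^2 * r 1^4 * r 2 * r 3^3 * x + (-23 : K) * r 0^2 * r 1^4 * r 2 * r 3^4 + (-24 : K) * r 0^2 * r 1^4 * r 2^2 * r 3^2 * x + (-62 : K) * r 0^2 * r 1^4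 * r 2^2 * r 3^3 + (8 : K) * r 0^2 * r 1^4 * r 2^3 * r 3 * x + (-62 : K) * r 0^2 * r 1^4 * r 2^3 * r 3^2 + (4 : K) * r 0^2 * r 1^4 * r 2^4 * x + (-23 : K) * r 0^2 * r 1^4 * r 2^4 * r 3 + r 0^2 * r 1^4 * r 2^5 + r 0^2 * r 1^5 * r 3^4 + (2 : K) * r 0^2 * r 1^5 * r 2 * r 3^3 + (-6 : K) * r 0^2 * r 1^5 * r 2^2 * r 3^2 + (2 : K) * r 0^2 * r 1^5 * r 2^3 * r 3 + r 0^2 * r 1^5 * r 2^4 + (-64 : K) * r 0^3 * r 2^3 * r 3^3 * x^2 + (-8 : K) * r 0^3 * r 2^3 * r 3^4 * x + (-2 : K) * r 0^3 * r 2^3 * r 3^5 + (-8 : K) * r 0^3 * r 2^4 * r 3^3 * x + (15 : K) * r 0^3 * r 2^4 * r 3^4 + (-2 : K) * r 0^3 * r 2^5 * r 3^3 + (96 : K) * r 0^3 * r 1 * r 2^2 * r 3^3 * x^2 + (8 : K) * r 0^3 * r 1 * r 2^2 * r 3^4 * x + (2 : K) * r 0^3 * r 1 * r 2^2 * r 3^5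 + (96 : K) * r 0^3 * r 1 * r 2^3 * r 3^2 * x^2 + (8 : K) * r 0^3 * r 1 * r 2^3 * r 3^3 * x + (-30 : K) * r 0^3 * r 1 * r 2^3 * r 3^4 + (8 : K) * r 0^3 * r 1 * r 2^4 * r 3^2 * x + (-30 : K) * r 0^3 * r 1 * r 2^4 * r 3^3 + (2 : K) * r 0^3 * r 1 * r 2^5 * r 3^2 + (96 : K) * r 0^3 * r 1^2 * r 2 * r 3^3 * x^2 + (8 : K) * r 0^3 * r 1^2 * r 2 * r 3^4 * x + (2 : K) * r 0^3 * r 1^2 * r 2 * r 3^5 + (48 : K) * r 0^3 * r 1^2 * r 2^2 * r 3^2 * x^2 + (496 : K) * r 0^3 * r 1^2 * r 2^2 * r 3^3 * x + (-62 : K) * r 0^3 * r 1^2 * r 2^2 * r 3^4 + (96 : K) * r 0^3 * r 1^2 * r 2^3 * r 3 * x^2 + (496 : K) * r 0^3 * r 1^2 * r 2^3 * r 3^2 * x + (-292 : K) * r 0^3 * r 1^2 * r 2^3 * r 3^3 + (8 : K) * r 0^3 * r 1^2 * r 2^4 * r 3 * x + (-62 : K) * r 0^3 * r 1^2 * r 2^4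 * r 3^2 + (2 : K) * r 0^3 * r 1^2 * r 2^5 * r 3 + (-64 : K) * r 0^3 * r 1^3 * r 3^3 * x^2 + (-8 : K) * r 0^3 * r 1^3 * r 3^4 * x + (-2 : K) * r 0^3 * r 1^3 * r 3^5 + (96 : K) * r 0^3 * r 1^3 * r 2 * r 3^2 * x^2 + (8 : K) * r 0^3 * r 1^3 * r 2 * r 3^3 * x + (-30 : K) * r 0^3 * r 1^3 * r 2 * r 3^4 + (96 : K) * r 0^3 * r 1^3 * r 2^2 * r 3 * x^2 + (496 : K) * r 0^3 * r 1^3 * r 2^2 * r 3^2 * x + (-292 : K) * r 0^3 * r 1^3 * r 2^2 * r 3^3 + (-64 : K) * r 0^3 * r 1^3 * r 2^3 * x^2 + (8 : K) * r 0^3 * r 1^3 * r 2^3 * r 3 * x + (-292 : K) * r 0^3 * r 1^3 * r 2^3 * r 3^2 + (-8 : K) * r 0^3 * r 1^3 * r 2^4 * x + (-30 : K) * r 0^3 * r 1^3 * r 2^4 * r 3 + (-2 : K) * r 0^3 * r 1^3 * r 2^5 + (-8 : K) * r 0^3 * r 1^4 * r 3^3 * x + (15 : K) * r 0^3 * r 1^4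 * r 3^4 + (8 : K) * r 0^3 * r 1^4 * r 2 * r 3^2 * x + (-30 : K) * r 0^3 * r 1^4 * r 2 * r 3^3 + (8 : K) * r 0^3 * r 1^4 * r 2^2 * r 3 * x + (-62 : K) * r 0^3 * r 1^4 * r 2^2 * r 3^2 + (-8 : K) * r 0^3 * r 1^4 * r 2^3 * x + (-30 : K) * r 0^3 * r 1^4 * r 2^3 * r 3 + (15 : K) * r 0^3 * r 1^4 * r 2^4 + (-2 : K) * r 0^3 * r 1^5 * r 3^3 + (2 : K) * r 0^3 * r 1^5 * r 2 * r 3^2 + (2 : K) * r 0^3 * r 1^5 * r 2^2 * r 3 + (-2 : K) * r 0^3 * r 1^5 * r 2^3 + (4 : K) * r 0^4 * r 2^2 * r 3^4 * x + r 0^4 * r 2^2 * r 3^5 + (-8 : K) * r 0^4 * r 2^3 * r 3^3 * x + (15 : K) * r 0^4 * r 2^3 * r 3^4 + (4 : K) * r 0^4 * r 2^4 * r 3^2 * x + (15 : K) * r 0^4 * r 2^4 * r 3^3 + r 0^4 * r 2^5 * r 3^2 + (-8 : K) * r 0^4 * r 1 * r 2 * r 3^4 * x + (-2 : K) * r 0^4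 * r 1 * r 2 * r 3^5 + (8 : K) * r 0^4 * r 1 * r 2^2 * r 3^3 * x + (-23 : K) * r 0^4 * r 1 * r 2^2 * r 3^4 + (8 : K) * r 0^4 * r 1 * r 2^3 * r 3^2 * x + (-30 : K) * r 0^4 * r 1 * r 2^3 * r 3^3 + (-8 : K) * r 0^4 * r 1 * r 2^4 * r 3 * x + (-23 : K) * r 0^4 * r 1 * r 2^4 * r 3^2 + (-2 : K) * r 0^4 * r 1 * r 2^5 * r 3 + (4 : K) * r 0^4 * r 1^2 * r 3^4 * x + r 0^4 * r 1^2 * r 3^5 + (8 : K) * r 0^4 * r 1^2 * r 2 * r 3^3 * x + (-23 : K) * r 0^4 * r 1^2 * r 2 * r 3^4 + (-24 : K) * r 0^4 * r 1^2 * r 2^2 * r 3^2 * x + (-62 : K) * r 0^4 * r 1^2 * r 2^2 * r 3^3 + (8 : K) * r 0^4 * r 1^2 * r 2^3 * r 3 * x + (-62 : K) * r 0^4 * r 1^2 * r 2^3 * r 3^2 + (4 : K) * r 0^4 * r 1^2 * r 2^4 * x + (-23 : K) * r 0^4 * r 1^2 * r 2^4 * r 3 + r 0^4 * r 1^2 *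 r 2^5 + (-8 : K) * r 0^4 * r 1^3 * r 3^3 * x + (15 : K) * r 0^4 * r 1^3 * r 3^4 + (8 : K) * r 0^4 * r 1^3 * r 2 * r 3^2 * x + (-30 : K) * r 0^4 * r 1^3 * r 2 * r 3^3 + (8 : K) * r 0^4 * r 1^3 * r 2^2 * r 3 * x + (-62 : K) * r 0^4 * r 1^3 * r 2^2 * r 3^2 + (-8 : K) * r 0^4 * r 1^3 * r 2^3 * x + (-30 : K) * r 0^4 * r 1^3 * r 2^3 * r 3 + (15 : K) * r 0^4 * r 1^3 * r 2^4 + (4 : K) * r 0^4 * r 1^4 * r 3^2 * x + (15 : K) * r 0^4 * r 1^4 * r 3^3 + (-8 : K) * r 0^4 * r 1^4 * r 2 * r 3 * x + (-23 : K) * r 0^4 * r 1^4 * r 2 * r 3^2 + (4 : K) * r 0^4 * r 1^4 * r 2^2 * x + (-23 : K) * r 0^4 * r 1^4 * r 2^2 * r 3 + (15 : K) * r 0^4 * r 1^4 * r 2^3 + r 0^4 * r 1^5 * r 3^2 + (-2 : K) * r 0^4 * r 1^5 * r 2 * r 3 + r 0^4 * r 1^5 * r 2^2 + r 0^5 * r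 2^2 * r 3^4 + (-2 : K) * r 0^5 * r 2^3 * r 3^3 + r 0^5 * r 2^4 * r 3^2 + (-2 : K) * r 0^5 * r 1 * r 2 * r 3^4 + (2 : K) * r 0^5 * r 1 * r 2^2 * r 3^3 + (2 : K) * r 0^5 * r 1 * r 2^3 * r 3^2 + (-2 : K) * r 0^5 * r 1 * r 2^4 * r 3 + r 0^5 * r 1^2 * r 3^4 + (2 : K) * r 0^5 * r 1^2 * r 2 * r 3^3 + (-6 : K) * r 0^5 * r 1^2 * r 2^2 * r 3^2 + (2 : K) * r 0^5 * r 1^2 * r 2^3 * r 3 + r 0^5 * r 1^2 * r 2^4 + (-2 : K) * r 0^5 * r 1^3 * r 3^3 + (2 : K) * r 0^5 * r 1^3 * r 2 * r 3^2 + (2 : K) * r 0^5 * r 1^3 * r 2^2 * r 3 + (-2 : K) * r 0^5 * r 1^3 * r 2^3 + r 0^5 * r 1^4 * r 3^2 + (-2 : K) * r 0^5 * r 1^4 * r 2 * r 3 + r 0^5 * r 1^4 * r 2^2) * hE1 + ((-16 : K) * r 1^2 * r 2^2 * r 3^2 * t^2 + (64 : K) * r 1^2 * r 2^2 * r 3^2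 * x * t + (64 : K) * r 1^2 * r 2^2 * r 3^2 * x * t^2 + (-64 : K) * r 1^2 * r 2^2 * r 3^2 * x^2 + (-160 : K) * r 1^2 * r 2^2 * r 3^2 * x^2 * t + (-64 : K) * r 1^2 * r 2^2 * r 3^2 * x^2 * t^2 + (64 : K) * r 1^2 * r 2^2 * r 3^2 * x^3 + (64 : K) * r 1^2 * r 2^2 * r 3^2 * x^3 * t + (8 : K) * r 1^2 * r 2^3 * r 3^3 * t + (-16 : K) * r 1^2 * r 2^3 * r 3^3 * x + (-16 : K) * r 1^2 * r 2^3 * r 3^3 * x * t + (16 : K) * r 1^2 * r 2^3 * r 3^3 * x^2 + (-4 : K) * r 1^2 * r 2^4 * r 3^4 + (8 : K) * r 1^3 * r 2^2 * r 3^3 * t + (-16 : K) * r 1^3 * r 2^2 * r 3^3 * x + (-16 : K) * r 1^3 * r 2^2 * r 3^3 * x * t + (16 : K) * r 1^3 * r 2^2 * r 3^3 * x^2 + (8 : K) * r 1^3 * r 2^3 * r 3^2 * t + (-16 : K) * r 1^3 * r 2^3 * r 3^2 * x + (-16 : K) * r 1^3 * r 2^3 * r 3^2 * x * t + (16 : K)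 * r 1^3 * r 2^3 * r 3^2 * x^2 + (72 : K) * r 1^3 * r 2^3 * r 3^3 * x + (-8 : K) * r 1^3 * r 2^3 * r 3^4 + (-8 : K) * r 1^3 * r 2^4 * r 3^3 + (-4 : K) * r 1^4 * r 2^2 * r 3^4 + (-8 : K) * r 1^4 * r 2^3 * r 3^3 + (-4 : K) * r 1^4 * r 2^4 * r 3^2 + (-128 : K) * r 0 * r 1 * r 2 * r 3 * t^3 + (768 : K) * r 0 * r 1 * r 2 * r 3 * x * t^2 + (768 : K) * r 0 * r 1 * r 2 * r 3 * x * t^3 + (-1536 : K) * r 0 * r 1 * r 2 * r 3 * x^2 * t + (-3328 : K) * r 0 * r 1 * r 2 * r 3 * x^2 * t^2 + (-1536 : K) * r 0 * r 1 * r 2 * r 3 * x^2 * t^3 + (1024 : K) * r 0 * r 1 * r 2 * r 3 * x^3 + (4096 : K) * r 0 * r 1 * r 2 * r 3 * x^3 * t + (4096 : K) * r 0 * r 1 * r 2 * r 3 * x^3 * t^2 + (1024 : K) * r 0 * r 1 * r 2 * r 3 * x^3 * t^3 + (-1024 : K) * r 0 * r 1 * r 2 * r 3 * x^4 + (-2048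 : K) * r 0 * r 1 * r 2 * r 3 * x^4 * t + (-1024 : K) * r 0 * r 1 * r 2 * r 3 * x^4 * t^2 + (32 : K) * r 0 * r 1 * r 2^2 * r 3^2 * t^2 + (-128 : K) * r 0 * r 1 * r 2^2 * r 3^2 * x * t + (-128 : K) * r 0 * r 1 * r 2^2 * r 3^2 * x * t^2 + (128 : K) * r 0 * r 1 * r 2^2 * r 3^2 * x^2 + (320 : K) * r 0 * r 1 * r 2^2 * r 3^2 * x^2 * t + (128 : K) * r 0 * r 1 * r 2^2 * r 3^2 * x^2 * t^2 + (-128 : K) * r 0 * r 1 * r 2^2 * r 3^2 * x^3 + (-128 : K) * r 0 * r 1 * r 2^2 * r 3^2 * x^3 * t + (-16 : K) * r 0 * r 1 * r 2^3 * r 3^3 * t + (32 : K) * r 0 * r 1 * r 2^3 * r 3^3 * x + (32 : K) * r 0 * r 1 * r 2^3 * r 3^3 * x * t + (-32 : K) * r 0 * r 1 * r 2^3 * r 3^3 * x^2 + (8 : K) * r 0 * r 1 * r 2^4 * r 3^4 + (32 : K) * r 0 * r 1^2 * r 2 * r 3^2 * t^2 + (-128 : K) * r 0 * r 1^2 * r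 2 * r 3^2 * x * t + (-128 : K) * r 0 * r 1^2 * r 2 * r 3^2 * x * t^2 + (128 : K) * r 0 * r 1^2 * r 2 * r 3^2 * x^2 + (320 : K) * r 0 * r 1^2 * r 2 * r 3^2 * x^2 * t + (128 : K) * r 0 * r 1^2 * r 2 * r 3^2 * x^2 * t^2 + (-128 : K) * r 0 * r 1^2 * r 2 * r 3^2 * x^3 + (-128 : K) * r 0 * r 1^2 * r 2 * r 3^2 * x^3 * t + (32 : K) * r 0 * r 1^2 * r 2^2 * r 3 * t^2 + (-128 : K) * r 0 * r 1^2 * r 2^2 * r 3 * x * t + (-128 : K) * r 0 * r 1^2 * r 2^2 * r 3 * x * t^2 + (128 : K) * r 0 * r 1^2 * r 2^2 * r 3 * x^2 + (320 : K) * r 0 * r 1^2 * r 2^2 * r 3 * x^2 * t + (128 : K) * r 0 * r 1^2 * r 2^2 * r 3 * x^2 * t^2 + (-128 : K) * r 0 * r 1^2 * r 2^2 * r 3 * x^3 + (-128 : K) * r 0 * r 1^2 * r 2^2 * r 3 * x^3 * t + (640 : K) * r 0 * r 1^2 * r 2^2 * r 3^2 * x * t + (-1280 : K) * r 0 * r 1^2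 * r 2^2 * r 3^2 * x^2 + (-1280 : K) * r 0 * r 1^2 * r 2^2 * r 3^2 * x^2 * t + (1152 : K) * r 0 * r 1^2 * r 2^2 * r 3^2 * x^3 + (-24 : K) * r 0 * r 1^2 * r 2^2 * r 3^3 * t + (48 : K) * r 0 * r 1^2 * r 2^2 * r 3^3 * x + (48 : K) * r 0 * r 1^2 * r 2^2 * r 3^3 * x * t + (-48 : K) * r 0 * r 1^2 * r 2^2 * r 3^3 * x^2 + (-24 : K) * r 0 * r 1^2 * r 2^3 * r 3^2 * t + (48 : K) * r 0 * r 1^2 * r 2^3 * r 3^2 * x + (48 : K) * r 0 * r 1^2 * r 2^3 * r 3^2 * x * t + (-48 : K) * r 0 * r 1^2 * r 2^3 * r 3^2 * x^2 + (-104 : K) * r 0 * r 1^2 * r 2^3 * r 3^3 * x + (16 : K) * r 0 * r 1^2 * r 2^3 * r 3^4 + (16 : K) * r 0 * r 1^2 * r 2^4 * r 3^3 + (-16 : K) * r 0 * r 1^3 * r 2 * r 3^3 * t + (32 : K) * r 0 * r 1^3 * r 2 * r 3^3 * x + (32 : K) * r 0 * r 1^3 * r 2 * r 3^3 * x * t +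 (-32 : K) * r 0 * r 1^3 * r 2 * r 3^3 * x^2 + (-24 : K) * r 0 * r 1^3 * r 2^2 * r 3^2 * t + (48 : K) * r 0 * r 1^3 * r 2^2 * r 3^2 * x + (48 : K) * r 0 * r 1^3 * r 2^2 * r 3^2 * x * t + (-48 : K) * r 0 * r 1^3 * r 2^2 * r 3^2 * x^2 + (-104 : K) * r 0 * r 1^3 * r 2^2 * r 3^3 * x + (16 : K) * r 0 * r 1^3 * r 2^2 * r 3^4 + (-16 : K) * r 0 * r 1^3 * r 2^3 * r 3 * t + (32 : K) * r 0 * r 1^3 * r 2^3 * r 3 * x + (32 : K) * r 0 * r 1^3 * r 2^3 * r 3 * x * t + (-32 : K) * r 0 * r 1^3 * r 2^3 * r 3 * x^2 + (-104 : K) * r 0 * r 1^3 * r 2^3 * r 3^2 * x + (168 : K) * r 0 * r 1^3 * r 2^3 * r 3^3 + (16 : K) * r 0 * r 1^3 * r 2^4 * r 3^2 + (8 : K) * r 0 * r 1^4 * r 2 * r 3^4 + (16 : K) * r 0 * r 1^4 * r 2^2 * r 3^3 + (16 : K) * r 0 * r 1^4 * r 2^3 * r 3^2 + (8 : K) * r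 0 * r 1^4 * r 2^4 * r 3 + (-16 : K) * r 0^2 * r 2^2 * r 3^2 * t^2 + (64 : K) * r 0^2 * r 2^2 * r 3^2 * x * t + (64 : K) * r 0^2 * r 2^2 * r 3^2 * x * t^2 + (-64 : K) * r 0^2 * r 2^2 * r 3^2 * x^2 + (-160 : K) * r 0^2 * r 2^2 * r 3^2 * x^2 * t + (-64 : K) * r 0^2 * r 2^2 * r 3^2 * x^2 * t^2 + (64 : K) * r 0^2 * r 2^2 * r 3^2 * x^3 + (64 : K) * r 0^2 * r 2^2 * r 3^2 * x^3 * t + (8 : K) * r 0^2 * r 2^3 * r 3^3 * t + (-16 : K) * r 0^2 * r 2^3 * r 3^3 * x + (-16 : K) * r 0^2 * r 2^3 * r 3^3 * x * t + (16 : K) * r 0^2 * r 2^3 * r 3^3 * x^2 + (-4 : K) * r 0^2 * r 2^4 * r 3^4 + (32 : K) * r 0^2 * r 1 * r 2 * r 3^2 * t^2 + (-128 : K) * r 0^2 * r 1 * r 2 * r 3^2 * x * t + (-128 : K) * r 0^2 * r 1 * r 2 * r 3^2 * x * t^2 + (128 : K) * r 0^2 * r 1 * r 2 * r 3^2 * x^2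 + (320 : K) * r 0^2 * r 1 * r 2 * r 3^2 * x^2 * t + (128 : K) * r 0^2 * r 1 * r 2 * r 3^2 * x^2 * t^2 + (-128 : K) * r 0^2 * r 1 * r 2 * r 3^2 * x^3 + (-128 : K) * r 0^2 * r 1 * r 2 * r 3^2 * x^3 * t + (32 : K) * r 0^2 * r 1 * r 2^2 * r 3 * t^2 + (-128 : K) * r 0^2 * r 1 * r 2^2 * r 3 * x * t + (-128 : K) * r 0^2 * r 1 * r 2^2 * r 3 * x * t^2 + (128 : K) * r 0^2 * r 1 * r 2^2 * r 3 * x^2 + (320 : K) * r 0^2 * r 1 * r 2^2 * r 3 * x^2 * t + (128 : K) * r 0^2 * r 1 * r 2^2 * r 3 * x^2 * t^2 + (-128 : K) * r 0^2 * r 1 * r 2^2 * r 3 * x^3 + (-128 : K) * r 0^2 * r 1 * r 2^2 * r 3 * x^3 * t + (640 : K) * r 0^2 * r 1 * r 2^2 * r 3^2 * x * t + (-1280 : K) * r 0^2 * r 1 * r 2^2 * r 3^2 * x^2 + (-1280 : K) * r 0^2 * r 1 * r 2^2 * r 3^2 * x^2 * t + (1152 : K) * r 0^2 * r 1 * r 2^2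 * r 3^2 * x^3 + (-24 : K) * r 0^2 * r 1 * r 2^2 * r 3^3 * t + (48 : K) * r 0^2 * r 1 * r 2^2 * r 3^3 * x + (48 : K) * r 0^2 * r 1 * r 2^2 * r 3^3 * x * t + (-48 : K) * r 0^2 * r 1 * r 2^2 * r 3^3 * x^2 + (-24 : K) * r 0^2 * r 1 * r 2^3 * r 3^2 * t + (48 : K) * r 0^2 * r 1 * r 2^3 * r 3^2 * x + (48 : K) * r 0^2 * r 1 * r 2^3 * r 3^2 * x * t + (-48 : K) * r 0^2 * r 1 * r 2^3 * r 3^2 * x^2 + (-104 : K) * r 0^2 * r 1 * r 2^3 * r 3^3 * x + (16 : K) * r 0^2 * r 1 * r 2^3 * r 3^4 + (16 : K) * r 0^2 * r 1 * r 2^4 * r 3^3 + (-16 : K) * r 0^2 * r 1^2 * r 3^2 * t^2 + (64 : K) * r 0^2 * r 1^2 * r 3^2 * x * t + (64 : K) * r 0^2 * r 1^2 * r 3^2 * x * t^2 + (-64 : K) * r 0^2 * r 1^2 * r 3^2 * x^2 + (-160 : K) * r 0^2 * r 1^2 * r 3^2 * x^2 * t + (-64 : K) * r 0^2 * r 1^2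 * r 3^2 * x^2 * t^2 + (64 : K) * r 0^2 * r 1^2 * r 3^2 * x^3 + (64 : K) * r 0^2 * r 1^2 * r 3^2 * x^3 * t + (32 : K) * r 0^2 * r 1^2 * r 2 * r 3 * t^2 + (-128 : K) * r 0^2 * r 1^2 * r 2 * r 3 * x * t + (-128 : K) * r 0^2 * r 1^2 * r 2 * r 3 * x * t^2 + (128 : K) * r 0^2 * r 1^2 * r 2 * r 3 * x^2 + (320 : K) * r 0^2 * r 1^2 * r 2 * r 3 * x^2 * t + (128 : K) * r 0^2 * r 1^2 * r 2 * r 3 * x^2 * t^2 + (-128 : K) * r 0^2 * r 1^2 * r 2 * r 3 * x^3 + (-128 : K) * r 0^2 * r 1^2 * r 2 * r 3 * x^3 * t + (640 : K) * r 0^2 * r 1^2 * r 2 * r 3^2 * x * t + (-1280 : K) * r 0^2 * r 1^2 * r 2 * r 3^2 * x^2 + (-1280 : K) * r 0^2 * r 1^2 * r 2 * r 3^2 * x^2 * t + (1152 : K) * r 0^2 * r 1^2 * r 2 * r 3^2 * x^3 + (-24 : K) * r 0^2 * r 1^2 * r 2 * r 3^3 * t + (48 : K) * r 0^2 * r 1^2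 * r 2 * r 3^3 * x + (48 : K) * r 0^2 * r 1^2 * r 2 * r 3^3 * x * t + (-48 : K) * r 0^2 * r 1^2 * r 2 * r 3^3 * x^2 + (-16 : K) * r 0^2 * r 1^2 * r 2^2 * t^2 + (64 : K) * r 0^2 * r 1^2 * r 2^2 * x * t + (64 : K) * r 0^2 * r 1^2 * r 2^2 * x * t^2 + (-64 : K) * r 0^2 * r 1^2 * r 2^2 * x^2 + (-160 : K) * r 0^2 * r 1^2 * r 2^2 * x^2 * t + (-64 : K) * r 0^2 * r 1^2 * r 2^2 * x^2 * t^2 + (64 : K) * r 0^2 * r 1^2 * r 2^2 * x^3 + (64 : K) * r 0^2 * r 1^2 * r 2^2 * x^3 * t + (640 : K) * r 0^2 * r 1^2 * r 2^2 * r 3 * x * t + (-1280 : K) * r 0^2 * r 1^2 * r 2^2 * r 3 * x^2 + (-1280 : K) * r 0^2 * r 1^2 * r 2^2 * r 3 * x^2 * t + (1152 : K) * r 0^2 * r 1^2 * r 2^2 * r 3 * x^3 + (160 : K) * r 0^2 * r 1^2 * r 2^2 * r 3^2 * t + (-320 : K) * r 0^2 * r 1^2 * r 2^2 * r 3^2 *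 x + (-320 : K) * r 0^2 * r 1^2 * r 2^2 * r 3^2 * x * t + (2112 : K) * r 0^2 * r 1^2 * r 2^2 * r 3^2 * x^2 + (-528 : K) * r 0^2 * r 1^2 * r 2^2 * r 3^3 * x + (36 : K) * r 0^2 * r 1^2 * r 2^2 * r 3^4 + (-24 : K) * r 0^2 * r 1^2 * r 2^3 * r 3 * t + (48 : K) * r 0^2 * r 1^2 * r 2^3 * r 3 * x + (48 : K) * r 0^2 * r 1^2 * r 2^3 * r 3 * x * t + (-48 : K) * r 0^2 * r 1^2 * r 2^3 * r 3 * x^2 + (-528 : K) * r 0^2 * r 1^2 * r 2^3 * r 3^2 * x + (264 : K) * r 0^2 * r 1^2 * r 2^3 * r 3^3 + (36 : K) * r 0^2 * r 1^2 * r 2^4 * r 3^2 + (8 : K) * r 0^2 * r 1^3 * r 3^3 * t + (-16 : K) * r 0^2 * r 1^3 * r 3^3 * x + (-16 : K) * r 0^2 * r 1^3 * r 3^3 * x * t + (16 : K) * r 0^2 * r 1^3 * r 3^3 * x^2 + (-24 : K) * r 0^2 * r 1^3 * r 2 * r 3^2 * t + (48 : K) * r 0^2 * r 1^3 * r 2 *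 r 3^2 * x + (48 : K) * r 0^2 * r 1^3 * r 2 * r 3^2 * x * t + (-48 : K) * r 0^2 * r 1^3 * r 2 * r 3^2 * x^2 + (-104 : K) * r 0^2 * r 1^3 * r 2 * r 3^3 * x + (16 : K) * r 0^2 * r 1^3 * r 2 * r 3^4 + (-24 : K) * r 0^2 * r 1^3 * r 2^2 * r 3 * t + (48 : K) * r 0^2 * r 1^3 * r 2^2 * r 3 * x + (48 : K) * r 0^2 * r 1^3 * r 2^2 * r 3 * x * t + (-48 : K) * r 0^2 * r 1^3 * r 2^2 * r 3 * x^2 + (-528 : K) * r 0^2 * r 1^3 * r 2^2 * r 3^2 * x + (264 : K) * r 0^2 * r 1^3 * r 2^2 * r 3^3 + (8 : K) * r 0^2 * r 1^3 * r 2^3 * t + (-16 : K) * r 0^2 * r 1^3 * r 2^3 * x + (-16 : K) * r 0^2 * r 1^3 * r 2^3 * x * t + (16 : K) * r 0^2 * r 1^3 * r 2^3 * x^2 + (-104 : K) * r 0^2 * r 1^3 * r 2^3 * r 3 * x + (264 : K) * r 0^2 * r 1^3 * r 2^3 * r 3^2 + (16 : K) * r 0^2 * r 1^3 * r 2^4 *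 r 3 + (-4 : K) * r 0^2 * r 1^4 * r 3^4 + (16 : K) * r 0^2 * r 1^4 * r 2 * r 3^3 + (36 : K) * r 0^2 * r 1^4 * r 2^2 * r 3^2 + (16 : K) * r 0^2 * r 1^4 * r 2^3 * r 3 + (-4 : K) * r 0^2 * r 1^4 * r 2^4 + (8 : K) * r 0^3 * r 2^2 * r 3^3 * t + (-16 : K) * r 0^3 * r 2^2 * r 3^3 * x + (-16 : K) * r 0^3 * r 2^2 * r 3^3 * x * t + (16 : K) * r 0^3 * r 2^2 * r 3^3 * x^2 + (8 : K) * r 0^3 * r 2^3 * r 3^2 * t + (-16 : K) * r 0^3 * r 2^3 * r 3^2 * x + (-16 : K) * r 0^3 * r 2^3 * r 3^2 * x * t + (16 : K) * r 0^3 * r 2^3 * r 3^2 * x^2 + (72 : K) * r 0^3 * r 2^3 * r 3^3 * x + (-8 : K) * r 0^3 * r 2^3 * r 3^4 + (-8 : K) * r 0^3 * r 2^4 * r 3^3 + (-16 : K) * r 0^3 * r 1 * r 2 * r 3^3 * t + (32 : K) * r 0^3 * r 1 * r 2 * r 3^3 * x + (32 : K) * r 0^3 * r 1 * r 2 * r 3^3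 * x * t + (-32 : K) * r 0^3 * r 1 * r 2 * r 3^3 * x^2 + (-24 : K) * r 0^3 * r 1 * r 2^2 * r 3^2 * t + (48 : K) * r 0^3 * r 1 * r 2^2 * r 3^2 * x + (48 : K) * r 0^3 * r 1 * r 2^2 * r 3^2 * x * t + (-48 : K) * r 0^3 * r 1 * r 2^2 * r 3^2 * x^2 + (-104 : K) * r 0^3 * r 1 * r 2^2 * r 3^3 * x + (16 : K) * r 0^3 * r 1 * r 2^2 * r 3^4 + (-16 : K) * r 0^3 * r 1 * r 2^3 * r 3 * t + (32 : K) * r 0^3 * r 1 * r 2^3 * r 3 * x + (32 : K) * r 0^3 * r 1 * r 2^3 * r 3 * x * t + (-32 : K) * r 0^3 * r 1 * r 2^3 * r 3 * x^2 + (-104 : K) * r 0^3 * r 1 * r 2^3 * r 3^2 * x + (168 : K) * r 0^3 * r 1 * r 2^3 * r 3^3 + (16 : K) * r 0^3 * r 1 * r 2^4 * r 3^2 + (8 : K) * r 0^3 * r 1^2 * r 3^3 * t + (-16 : K) * r 0^3 * r 1^2 * r 3^3 * x + (-16 : K) * r 0^3 * r 1^2 * r 3^3 * x * t + (16 : K)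 * r 0^3 * r 1^2 * r 3^3 * x^2 + (-24 : K) * r 0^3 * r 1^2 * r 2 * r 3^2 * t + (48 : K) * r 0^3 * r 1^2 * r 2 * r 3^2 * x + (48 : K) * r 0^3 * r 1^2 * r 2 * r 3^2 * x * t + (-48 : K) * r 0^3 * r 1^2 * r 2 * r 3^2 * x^2 + (-104 : K) * r 0^3 * r 1^2 * r 2 * r 3^3 * x + (16 : K) * r 0^3 * r 1^2 * r 2 * r 3^4 + (-24 : K) * r 0^3 * r 1^2 * r 2^2 * r 3 * t + (48 : K) * r 0^3 * r 1^2 * r 2^2 * r 3 * x + (48 : K) * r 0^3 * r 1^2 * r 2^2 * r 3 * x * t + (-48 : K) * r 0^3 * r 1^2 * r 2^2 * r 3 * x^2 + (-528 : K) * r 0^3 * r 1^2 * r 2^2 * r 3^2 * x + (264 : K) * r 0^3 * r 1^2 * r 2^2 * r 3^3 + (8 : K) * r 0^3 * r 1^2 * r 2^3 * t + (-16 : K) * r 0^3 * r 1^2 * r 2^3 * x + (-16 : K) * r 0^3 * r 1^2 * r 2^3 * x * t + (16 : K) * r 0^3 * r 1^2 * r 2^3 * x^2 + (-104 : K) * r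 0^3 * r 1^2 * r 2^3 * r 3 * x + (264 : K) * r 0^3 * r 1^2 * r 2^3 * r 3^2 + (16 : K) * r 0^3 * r 1^2 * r 2^4 * r 3 + (8 : K) * r 0^3 * r 1^3 * r 3^2 * t + (-16 : K) * r 0^3 * r 1^3 * r 3^2 * x + (-16 : K) * r 0^3 * r 1^3 * r 3^2 * x * t + (16 : K) * r 0^3 * r 1^3 * r 3^2 * x^2 + (72 : K) * r 0^3 * r 1^3 * r 3^3 * x + (-8 : K) * r 0^3 * r 1^3 * r 3^4 + (-16 : K) * r 0^3 * r 1^3 * r 2 * r 3 * t + (32 : K) * r 0^3 * r 1^3 * r 2 * r 3 * x + (32 : K) * r 0^3 * r 1^3 * r 2 * r 3 * x * t + (-32 : K) * r 0^3 * r 1^3 * r 2 * r 3 * x^2 + (-104 : K) * r 0^3 * r 1^3 * r 2 * r 3^2 * x + (168 : K) * r 0^3 * r 1^3 * r 2 * r 3^3 + (8 : K) * r 0^3 * r 1^3 * r 2^2 * t + (-16 : K) * r 0^3 * r 1^3 * r 2^2 * x + (-16 : K) * r 0^3 * r 1^3 * r 2^2 * x * t + (16 : K) * r 0^3 * r 1^3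 * r 2^2 * x^2 + (-104 : K) * r 0^3 * r 1^3 * r 2^2 * r 3 * x + (264 : K) * r 0^3 * r 1^3 * r 2^2 * r 3^2 + (72 : K) * r 0^3 * r 1^3 * r 2^3 * x + (168 : K) * r 0^3 * r 1^3 * r 2^3 * r 3 + (-8 : K) * r 0^3 * r 1^3 * r 2^4 + (-8 : K) * r 0^3 * r 1^4 * r 3^3 + (16 : K) * r 0^3 * r 1^4 * r 2 * r 3^2 + (16 : K) * r 0^3 * r 1^4 * r 2^2 * r 3 + (-8 : K) * r 0^3 * r 1^4 * r 2^3 + (-4 : K) * r 0^4 * r 2^2 * r 3^4 + (-8 : K) * r 0^4 * r 2^3 * r 3^3 + (-4 : K) * r 0^4 * r 2^4 * r 3^2 + (8 : K) * r 0^4 * r 1 * r 2 * r 3^4 + (16 : K) * r 0^4 * r 1 * r 2^2 * r 3^3 + (16 : K) * r 0^4 * r 1 * r 2^3 * r 3^2 + (8 : K) * r 0^4 * r 1 * r 2^4 * r 3 + (-4 : K) * r 0^4 * r 1^2 * r 3^4 + (16 : K) * r 0^4 * r 1^2 * r 2 * r 3^3 + (36 : K) * r 0^4 * r 1^2 * r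 2^2 * r 3^2 + (16 : K) * r 0^4 * r 1^2 * r 2^3 * r 3 + (-4 : K) * r 0^4 * r 1^2 * r 2^4 + (-8 : K) * r 0^4 * r 1^3 * r 3^3 + (16 : K) * r 0^4 * r 1^3 * r 2 * r 3^2 + (16 : K) * r 0^4 * r 1^3 * r 2^2 * r 3 + (-8 : K) * r 0^4 * r 1^3 * r 2^3 + (-4 : K) * r 0^4 * r 1^4 * r 3^2 + (8 : K) * r 0^4 * r 1^4 * r 2 * r 3 + (-4 : K) * r 0^4 * r 1^4 * r 2^2) * hE2 + ((128 : K) * x * t^4 + (-768 : K) * x^2 * t^3 + (-768 : K) * x^2 * t^4 + (1536 : K) * x^3 * t^2 + (-704 : K) * x^3 * t^3 + (1536 : K) * x^3 * t^4 + (-1024 : K) * x^4 * t + (512 : K) * x^4 * t^2 + (512 : K) * x^4 * t^3 + (-1024 : K) * x^4 * t^4 + (1024 : K) * x^5 * t + (-2048 : K) * x^5 * t^2 + (1024 : K) * x^5 * t^3 + (32 : K) * r 1 * r 2 * r 3 * t^3 + (-192 : K) * r 1 * r 2 * r 3 * x * t^2 + (-192 : K) * r 1 * r 2 * r 3 * x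 * t^3 + (384 : K) * r 1 * r 2 * r 3 * x^2 * t + (-176 : K) * r 1 * r 2 * r 3 * x^2 * t^2 + (384 : K) * r 1 * r 2 * r 3 * x^2 * t^3 + (-256 : K) * r 1 * r 2 * r 3 * x^3 + (128 : K) * r 1 * r 2 * r 3 * x^3 * t + (128 : K) * r 1 * r 2 * r 3 * x^3 * t^2 + (-256 : K) * r 1 * r 2 * r 3 * x^3 * t^3 + (256 : K) * r 1 * r 2 * r 3 * x^4 + (-512 : K) * r 1 * r 2 * r 3 * x^4 * t + (256 : K) * r 1 * r 2 * r 3 * x^4 * t^2 + (-252 : K) * r 1^2 * r 2^2 * r 3^2 * x * t + (288 : K) * r 1^2 * r 2^2 * r 3^2 * x^2 + (288 : K) * r 1^2 * r 2^2 * r 3^2 * x^2 * t + (-256 : K) * r 1^2 * r 2^2 * r 3^2 * x^3 + (-27 : K) * r 1^3 * r 2^3 * r 3^3 + (32 : K) * r 0 * r 2 * r 3 * t^3 + (-192 : K) * r 0 * r 2 * r 3 * x * t^2 + (-192 : K) * r 0 * r 2 * r 3 * x * t^3 + (384 : K) * r 0 * r 2 * r 3 * x^2 * t + (-176 : K) *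 r 0 * r 2 * r 3 * x^2 * t^2 + (384 : K) * r 0 * r 2 * r 3 * x^2 * t^3 + (-256 : K) * r 0 * r 2 * r 3 * x^3 + (128 : K) * r 0 * r 2 * r 3 * x^3 * t + (128 : K) * r 0 * r 2 * r 3 * x^3 * t^2 + (-256 : K) * r 0 * r 2 * r 3 * x^3 * t^3 + (256 : K) * r 0 * r 2 * r 3 * x^4 + (-512 : K) * r 0 * r 2 * r 3 * x^4 * t + (256 : K) * r 0 * r 2 * r 3 * x^4 * t^2 + (32 : K) * r 0 * r 1 * r 3 * t^3 + (-192 : K) * r 0 * r 1 * r 3 * x * t^2 + (-192 : K) * r 0 * r 1 * r 3 * x * t^3 + (384 : K) * r 0 * r 1 * r 3 * x^2 * t + (-176 : K) * r 0 * r 1 * r 3 * x^2 * t^2 + (384 : K) * r 0 * r 1 * r 3 * x^2 * t^3 + (-256 : K) * r 0 * r 1 * r 3 * x^3 + (128 : K) * r 0 * r 1 * r 3 * x^3 * t + (128 : K) * r 0 * r 1 * r 3 * x^3 * t^2 + (-256 : K) * r 0 * r 1 * r 3 * x^3 * t^3 + (256 : K) * r 0 * r 1 * r 3 * x^4 + (-512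 : K) * r 0 * r 1 * r 3 * x^4 * t + (256 : K) * r 0 * r 1 * r 3 * x^4 * t^2 + (32 : K) * r 0 * r 1 * r 2 * t^3 + (-192 : K) * r 0 * r 1 * r 2 * x * t^2 + (-192 : K) * r 0 * r 1 * r 2 * x * t^3 + (384 : K) * r 0 * r 1 * r 2 * x^2 * t + (-176 : K) * r 0 * r 1 * r 2 * x^2 * t^2 + (384 : K) * r 0 * r 1 * r 2 * x^2 * t^3 + (-256 : K) * r 0 * r 1 * r 2 * x^3 + (128 : K) * r 0 * r 1 * r 2 * x^3 * t + (128 : K) * r 0 * r 1 * r 2 * x^3 * t^2 + (-256 : K) * r 0 * r 1 * r 2 * x^3 * t^3 + (256 : K) * r 0 * r 1 * r 2 * x^4 + (-512 : K) * r 0 * r 1 * r 2 * x^4 * t + (256 : K) * r 0 * r 1 * r 2 * x^4 * t^2 + (-2432 : K) * r 0 * r 1 * r 2 * r 3 * x * t^2 + (7424 : K) * r 0 * r 1 * r 2 * r 3 * x^2 * t + (7424 : K) * r 0 * r 1 * r 2 * r 3 * x^2 * t^2 + (-5120 : K) * r 0 * r 1 * r 2 * r 3 * x^3 + (-12928 :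 K) * r 0 * r 1 * r 2 * r 3 * x^3 * t + (-5120 : K) * r 0 * r 1 * r 2 * r 3 * x^3 * t^2 + (4608 : K) * r 0 * r 1 * r 2 * r 3 * x^4 + (4608 : K) * r 0 * r 1 * r 2 * r 3 * x^4 * t + (-504 : K) * r 0 * r 1 * r 2^2 * r 3^2 * x * t + (576 : K) * r 0 * r 1 * r 2^2 * r 3^2 * x^2 + (576 : K) * r 0 * r 1 * r 2^2 * r 3^2 * x^2 * t + (-512 : K) * r 0 * r 1 * r 2^2 * r 3^2 * x^3 + (-504 : K) * r 0 * r 1^2 * r 2 * r 3^2 * x * t + (576 : K) * r 0 * r 1^2 * r 2 * r 3^2 * x^2 + (576 : K) * r 0 * r 1^2 * r 2 * r 3^2 * x^2 * t + (-512 : K) * r 0 * r 1^2 * r 2 * r 3^2 * x^3 + (-504 : K) * r 0 * r 1^2 * r 2^2 * r 3 * x * t + (576 : K) * r 0 * r 1^2 * r 2^2 * r 3 * x^2 + (576 : K) * r 0 * r 1^2 * r 2^2 * r 3 * x^2 * t + (-512 : K) * r 0 * r 1^2 * r 2^2 * r 3 * x^3 + (-288 : K) * r 0 * r 1^2 * r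 2^2 * r 3^2 * t + (576 : K) * r 0 * r 1^2 * r 2^2 * r 3^2 * x + (576 : K) * r 0 * r 1^2 * r 2^2 * r 3^2 * x * t + (-96 : K) * r 0 * r 1^2 * r 2^2 * r 3^2 * x^2 + (-81 : K) * r 0 * r 1^2 * r 2^3 * r 3^3 + (-81 : K) * r 0 * r 1^3 * r 2^2 * r 3^3 + (-81 : K) * r 0 * r 1^3 * r 2^3 * r 3^2 + (-252 : K) * r 0^2 * r 2^2 * r 3^2 * x * t + (288 : K) * r 0^2 * r 2^2 * r 3^2 * x^2 + (288 : K) * r 0^2 * r 2^2 * r 3^2 * x^2 * t + (-256 : K) * r 0^2 * r 2^2 * r 3^2 * x^3 + (-504 : K) * r 0^2 * r 1 * r 2 * r 3^2 * x * t + (576 : K) * r 0^2 * r 1 * r 2 * r 3^2 * x^2 + (576 : K) * r 0^2 * r 1 * r 2 * r 3^2 * x^2 * t + (-512 : K) * r 0^2 * r 1 * r 2 * r 3^2 * x^3 + (-504 : K) * r 0^2 * r 1 * r 2^2 * r 3 * x * t + (576 : K) * r 0^2 * r 1 * r 2^2 * r 3 * x^2 + (576 : K) * r 0^2 * r 1 *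 r 2^2 * r 3 * x^2 * t + (-512 : K) * r 0^2 * r 1 * r 2^2 * r 3 * x^3 + (-288 : K) * r 0^2 * r 1 * r 2^2 * r 3^2 * t + (576 : K) * r 0^2 * r 1 * r 2^2 * r 3^2 * x + (576 : K) * r 0^2 * r 1 * r 2^2 * r 3^2 * x * t + (-96 : K) * r 0^2 * r 1 * r 2^2 * r 3^2 * x^2 + (-81 : K) * r 0^2 * r 1 * r 2^3 * r 3^3 + (-252 : K) * r 0^2 * r 1^2 * r 3^2 * x * t + (288 : K) * r 0^2 * r 1^2 * r 3^2 * x^2 + (288 : K) * r 0^2 * r 1^2 * r 3^2 * x^2 * t + (-256 : K) * r 0^2 * r 1^2 * r 3^2 * x^3 + (-504 : K) * r 0^2 * r 1^2 * r 2 * r 3 * x * t + (576 : K) * r 0^2 * r 1^2 * r 2 * r 3 * x^2 + (576 : K) * r 0^2 * r 1^2 * r 2 * r 3 * x^2 * t + (-512 : K) * r 0^2 * r 1^2 * r 2 * r 3 * x^3 + (-288 : K) * r 0^2 * r 1^2 * r 2 * r 3^2 * t + (576 : K) * r 0^2 * r 1^2 * r 2 * r 3^2 * x + (576 : K) * r 0^2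 * r 1^2 * r 2 * r 3^2 * x * t + (-96 : K) * r 0^2 * r 1^2 * r 2 * r 3^2 * x^2 + (-252 : K) * r 0^2 * r 1^2 * r 2^2 * x * t + (288 : K) * r 0^2 * r 1^2 * r 2^2 * x^2 + (288 : K) * r 0^2 * r 1^2 * r 2^2 * x^2 * t + (-256 : K) * r 0^2 * r 1^2 * r 2^2 * x^3 + (-288 : K) * r 0^2 * r 1^2 * r 2^2 * r 3 * t + (576 : K) * r 0^2 * r 1^2 * r 2^2 * r 3 * x + (576 : K) * r 0^2 * r 1^2 * r 2^2 * r 3 * x * t + (-96 : K) * r 0^2 * r 1^2 * r 2^2 * r 3 * x^2 + (-768 : K) * r 0^2 * r 1^2 * r 2^2 * r 3^2 * x + (-162 : K) * r 0^2 * r 1^2 * r 2^2 * r 3^3 + (-162 : K) * r 0^2 * r 1^2 * r 2^3 * r 3^2 + (-81 : K) * r 0^2 * r 1^3 * r 2 * r 3^3 + (-162 : K) * r 0^2 * r 1^3 * r 2^2 * r 3^2 + (-81 : K) * r 0^2 * r 1^3 * r 2^3 * r 3 + (-27 : K) * r 0^3 * r 2^3 * r 3^3 + (-81 : K) * r 0^3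 * r 1 * r 2^2 * r 3^3 + (-81 : K) * r 0^3 * r 1 * r 2^3 * r 3^2 + (-81 : K) * r 0^3 * r 1^2 * r 2 * r 3^3 + (-162 : K) * r 0^3 * r 1^2 * r 2^2 * r 3^2 + (-81 : K) * r 0^3 * r 1^2 * r 2^3 * r 3 + (-27 : K) * r 0^3 * r 1^3 * r 3^3 + (-81 : K) * r 0^3 * r 1^3 * r 2 * r 3^2 + (-81 : K) * r 0^3 * r 1^3 * r 2^2 * r 3 + (-27 : K) * r 0^3 * r 1^3 * r 2^3) * hE3 + ((4096 : K) * x^2 * t^2 + (-8704 : K) * x^2 * t^3 + (4096 : K) * x^2 * t^4 + (-8192 : K) * x^3 * t + (11264 : K) * x^3 * t^2 + (11264 : K) * x^3 * t^3 + (-8192 : K) * x^3 * t^4 + (4096 : K) * x^4 + (2048 : K) * x^4 * t + (-21760 : K) * x^4 * t^2 + (2048 : K) * x^4 * t^3 + (4096 : K) * x^4 * t^4 + (-4096 : K) * x^5 + (6144 : K) * x^5 * t + (6144 : K) * x^5 * t^2 + (-4096 : K) * x^5 * t^3 + (-256 : K) * r 0 * r 1 * r 2 * r 3 * t^2 + (2048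 : K) * r 0 * r 1 * r 2 * r 3 * x * t + (2048 : K) * r 0 * r 1 * r 2 * r 3 * x * t^2 + (-2048 : K) * r 0 * r 1 * r 2 * r 3 * x^2 + (-11776 : K) * r 0 * r 1 * r 2 * r 3 * x^2 * t + (-2048 : K) * r 0 * r 1 * r 2 * r 3 * x^2 * t^2 + (9216 : K) * r 0 * r 1 * r 2 * r 3 * x^3 + (9216 : K) * r 0 * r 1 * r 2 * r 3 * x^3 * t + (-6912 : K) * r 0 * r 1 * r 2 * r 3 * x^4 + (256 : K) * r 0^2 * r 1^2 * r 2^2 * r 3^2) * hE4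
end
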